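/- arXiv:2502.07355 — 10 statements merged into one kernel-verified Lean document; each statement's English description precedes it below -/
import Mathlib

section
/- Let T be a Tanner graph of a BATS code. If two parameter pairs (A_1, B_1) and (A_2, B_2) are both valid for T, then the pair (A_1 ∪ A_2 ∪ A_e, B_1 ∪ B_2) is also valid for T, where A_e is the set of all VNs V not in A_1 ∪ A_2 that are neighbors of at least one B-CN in B_1 ∪ B_2 and have no B-CN neighbor outside B_1 ∪ B_2. -/
/-- The rank of a B-CN restricted to a subset `S` of the variable nodes:
`rk(C^{(S)}) = rank(G^{(S)} · H)` where `G^{(S)}` is the row-submatrix of `G`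
formed by the rows indexed by `S`. -/
noncomputable def batchRank {F : Type*} [Field F] {K M Ni : ℕ}
    (G : Matrix (Fin K) (Fin M) F) (H : Matrix (Fin M) (Fin Ni) F)
    (S : Finset (Fin K)) : ℕ :=
  ((G.submatrix (fun v : {x // x ∈ S} => v.1) id) * H).rank

/-- A parameter pair `(A, B)` of a set of VNs and a set of B-CNs is *valid*
for the Tanner graph of a BATS code given by neighbourhoods `Neib`,
generator matrices `G` and transfer matrices `H`:
(C1) every B-CN neighbour of every VN in `A` lies in `B`;
(C2) for every `C ∈ B`, `|Neib(C) ∩ A| > rk(C^{(Neib(C) ∩ A)})`;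
(C3) every VN not in `A` has at least one B-CN neighbour outside `B`. -/
def ValidPair {F : Type*} [Field F] {K M n : ℕ} (N : Fin n → ℕ)
    (Neib : Fin n → Finset (Fin K))
    (G : Fin n → Matrix (Fin K) (Fin M) F)
    (H : (i : Fin n) → Matrix (Fin M) (Fin (N i)) F)
    (A : Finset (Fin K)) (B : Finset (Fin n)) : Prop :=
  (∀ v ∈ A, ∀ i : Fin n, v ∈ Neib i → i ∈ B) ∧
  (∀ i ∈ B, batchRank (G i) (H i) (Neib i ∩ A) < (Neib i ∩ A).card) ∧
  (∀ v : Fin K, v ∉ A → ∃ i : Fin n, i ∉ B ∧ v ∈ Neib i)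

/-- Auxiliary: the rank of a row-submatrix indexed by `S` is at most the rank of the
row-submatrix indexed by `S₁` plus the number of extra rows. -/
lemma rank_rows_le_aux {F : Type*} [Field F] {K N : ℕ} (A : Matrix (Fin K) (Fin N) F)
    (S₁ S : Finset (Fin K)) :
    (A.submatrix (fun v : {x // x ∈ S} => v.1) id).rank ≤
      (A.submatrix (fun v : {x // x ∈ S₁} => v.1) id).rank + (S \ S₁).card := by
  classical
  rw [Matrix.rank_eq_finrank_span_row, Matrix.rank_eq_finrank_span_row]
  have hr : ∀ (T : Finset (Fin K)),
      Set.range (A.submatrix (fun v : {x // x ∈ T} => v.1) id).row = (fun v => A v) '' ↑T := by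
    intro T
    ext x
    constructor
    · rintro ⟨⟨a, ha⟩, rfl⟩; exact ⟨a, ha, rfl⟩
    · rintro ⟨a, ha, rfl⟩; exact ⟨⟨a, ha⟩, rfl⟩
  rw [hr, hr]
  have hsub : (fun v => A v) '' ↑S ⊆ (fun v => A v) '' ↑S₁ ∪ (fun v => A v) '' ↑(S \ S₁) := by
    rintro x ⟨v, hv, rfl⟩
    by_cases hv1 : v ∈ S₁
    · exact Or.inl ⟨v, hv1, rfl⟩
    · exact Or.inr ⟨v, Finset.mem_sdiff.2 ⟨hv, hv1⟩, rfl⟩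
  calc Module.finrank F ↥(Submodule.span F ((fun v => A v) '' ↑S))
      ≤ Module.finrank F ↥(Submodule.span F ((fun v => A v) '' ↑S₁) ⊔
          Submodule.span F ((fun v => A v) '' ↑(S \ S₁))) := by
        apply Submodule.finrank_mono
        rw [← Submodule.span_union]
        exact Submodule.span_mono hsub
    _ ≤ Module.finrank F ↥(Submodule.span F ((fun v => A v) '' ↑S₁)) +
          Module.finrank F ↥(Submodule.span F ((fun v => A v) '' ↑(S \ S₁))) :=
        Submodule.finrank_add_le_finrank_add_finrank _ _
    _ ≤ _ := by
        gcongr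
        have heq : (fun v => A v) '' ↑(S \ S₁) = ↑((S \ S₁).image (fun v => A v)) := by
          simp [Finset.coe_image]
        rw [heq]
        exact (finrank_span_finset_le_card _).trans (Finset.card_image_le)

/-- Auxiliary: if `(A, B)` satisfies (C2) at batch `i` with inner set `S₁` and `S₁ ⊆ S`,
then it satisfies it with `S` too. -/
lemma batchRank_lt_of_subset {F : Type*} [Field F] {K M Ni : ℕ}
    (G : Matrix (Fin K) (Fin M) F) (H : Matrix (Fin M) (Fin Ni) F)
    (S₁ S : Finset (Fin K)) (hsub : S₁ ⊆ S)
    (h : batchRank G H S₁ < S₁.card) : batchRank G H S < S.card := by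
  have key : batchRank G H S ≤ batchRank G H S₁ + (S \ S₁).card := by
    unfold batchRank
    have e : ∀ (T : Finset (Fin K)),
        (G.submatrix (fun v : {x // x ∈ T} => v.1) id) * H =
          (G * H).submatrix (fun v : {x // x ∈ T} => v.1) id := by
      intro T
      ext a b
      simp [Matrix.mul_apply]
    rw [e, e]
    exact rank_rows_le_aux (G * H) S₁ S
  calc batchRank G H S ≤ batchRank G H S₁ + (S \ S₁).card := key
    _ < S₁.card + (S \ S₁).card := by omega
    _ = S.card := by
        rw [add_comm]
        exact Finset.card_sdiff_add_card_eq_card hsub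

/-- If `(A₁, B₁)` and `(A₂, B₂)` are both valid for the Tanner graph `T` of a
BATS code, then `(A₁ ∪ A₂ ∪ Ae, B₁ ∪ B₂)` is also valid for `T`, where `Ae` is
the set of all VNs not in `A₁ ∪ A₂` that are neighbours of at least one B-CN in
`B₁ ∪ B₂` and have no B-CN neighbour outside `B₁ ∪ B₂`. -/
theorem validPair_union {F : Type*} [Field F] {K M n : ℕ}
    (hK : 0 < K) (hM : 0 < M) (hn : 0 < n)
    (N : Fin n → ℕ) (Neib : Fin n → Finset (Fin K))
    (G : Fin n → Matrix (Fin K) (Fin M) F)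
    (H : (i : Fin n) → Matrix (Fin M) (Fin (N i)) F)
    (A₁ A₂ : Finset (Fin K)) (B₁ B₂ : Finset (Fin n))
    (h₁ : ValidPair N Neib G H A₁ B₁) (h₂ : ValidPair N Neib G H A₂ B₂)
    (Ae : Finset (Fin K))
    (hAe : ∀ v : Fin K, v ∈ Ae ↔
      v ∉ A₁ ∪ A₂ ∧ (∃ i ∈ B₁ ∪ B₂, v ∈ Neib i) ∧
        ∀ i : Fin n, v ∈ Neib i → i ∈ B₁ ∪ B₂) :
    ValidPair N Neib G H (A₁ ∪ A₂ ∪ Ae) (B₁ ∪ B₂) := by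
  obtain ⟨h₁1, h₁2, h₁3⟩ := h₁
  obtain ⟨h₂1, h₂2, h₂3⟩ := h₂
  refine ⟨?_, ?_, ?_⟩
  · -- (C1)
    intro v hv i hvi
    rcases Finset.mem_union.1 hv with hv | hv
    · rcases Finset.mem_union.1 hv with hv | hv
      · exact Finset.mem_union_left _ (h₁1 v hv i hvi)
      · exact Finset.mem_union_right _ (h₂1 v hv i hvi)
    · exact ((hAe v).1 hv).2.2 i hvi
  · -- (C2)
    intro i hi
    rcases Finset.mem_union.1 hi with hi | hi
    · refine batchRank_lt_of_subset _ _ _ _ ?_ (h₁2 i hi)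
      intro x hx
      rw [Finset.mem_inter] at hx ⊢
      exact ⟨hx.1, Finset.mem_union_left _ (Finset.mem_union_left _ hx.2)⟩
    · refine batchRank_lt_of_subset _ _ _ _ ?_ (h₂2 i hi)
      intro x hx
      rw [Finset.mem_inter] at hx ⊢
      exact ⟨hx.1, Finset.mem_union_left _ (Finset.mem_union_right _ hx.2)⟩
  · -- (C3)
    intro v hv
    have hv12 : v ∉ A₁ ∪ A₂ := fun h => hv (Finset.mem_union_left _ h)
    have hvAe : v ∉ Ae := fun h => hv (Finset.mem_union_right _ h)
    by_cases hall : ∀ i : Fin n, v ∈ Neib i → i ∈ B₁ ∪ B₂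
    · exfalso
      apply hvAe
      rw [hAe]
      refine ⟨hv12, ?_, hall⟩
      have hv1 : v ∉ A₁ := fun h => hv12 (Finset.mem_union_left _ h)
      obtain ⟨i, hiB, hiN⟩ := h₁3 v hv1
      exact ⟨i, hall i hiN, hiN⟩
    · push_neg at hall
      obtain ⟨i, hiN, hiB⟩ := hall
      exact ⟨i, hiB, hiN⟩
end

section
/- A Tanner graph T of a BATS code cannot be reduced to the empty graph by BP (peeling) decoding — i.e., there exists no ordering v_1,…,v_K of all K VNs such that for every t ∈ {1,…,K} some batch i satisfies v_t ∈ R_i(t) and rank(G_i^{(R_i(t))} H_i) = |R_i(t)|, where R_i(t) = Neib(C_i) ∖ {v_1,…,v_{t−1}} — if and only if T is a stopping graph, i.e., there exist a non-empty set A of VNs and a (possibly empty) set B of B-CNs such that (A, B) is valid for T. -/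
set_option maxHeartbeats 1600000

lemma batchRank_eq {F : Type*} [Field F] {K M Ni : ℕ}
    (G : Matrix (Fin K) (Fin M) F) (H : Matrix (Fin M) (Fin Ni) F)
    (S : Finset (Fin K)) :
    batchRank G H S = ((G * H).submatrix (fun v : {x // x ∈ S} => v.1) id).rank := by
  unfold batchRank
  congr 1

lemma batchRank_le_card {F : Type*} [Field F] {K M Ni : ℕ}
    (G : Matrix (Fin K) (Fin M) F) (H : Matrix (Fin M) (Fin Ni) F)
    (S : Finset (Fin K)) : batchRank G H S ≤ S.card := by
  rw [batchRank_eq]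
  simpa [Fintype.card_coe] using
    Matrix.rank_le_card_height ((G * H).submatrix (fun v : {x // x ∈ S} => v.1) id)

lemma batchRank_subset {F : Type*} [Field F] {K M Ni : ℕ}
    {G : Matrix (Fin K) (Fin M) F} {H : Matrix (Fin M) (Fin Ni) F}
    {S T : Finset (Fin K)} (hST : S ⊆ T)
    (hT : batchRank G H T = T.card) : batchRank G H S = S.card := by
  classical
  rw [batchRank_eq] at hT ⊢
  set P := G * H with hP
  have hli : LinearIndependent F (P.submatrix (fun v : {x // x ∈ T} => v.1) id).row := by
    rw [linearIndependent_iff_card_eq_finrank_span, Set.finrank, Fintype.card_coe]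
    rw [Matrix.rank_eq_finrank_span_row] at hT
    exact hT.symm
  have hg : Function.Injective (fun v : {x // x ∈ S} => (⟨v.1, hST v.2⟩ : {x // x ∈ T})) := by
    intro a b hab
    exact Subtype.ext (congrArg (fun x : {x // x ∈ T} => x.1) hab)
  have hcomp : (P.submatrix (fun v : {x // x ∈ S} => v.1) id).row
      = (P.submatrix (fun v : {x // x ∈ T} => v.1) id).row ∘
        (fun v : {x // x ∈ S} => (⟨v.1, hST v.2⟩ : {x // x ∈ T})) := rfl
  have hli' : LinearIndependent F (P.submatrix (fun v : {x // x ∈ S} => v.1) id).row := by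
    rw [hcomp]; exact hli.comp _ hg
  rw [hli'.rank_matrix, Fintype.card_coe]

lemma peel_list {F : Type*} [Field F] {K M n : ℕ}
    (N : Fin n → ℕ) (Neib : Fin n → Finset (Fin K))
    (G : Fin n → Matrix (Fin K) (Fin M) F)
    (H : (i : Fin n) → Matrix (Fin M) (Fin (N i)) F)
    (hstop : ¬ ∃ (A : Finset (Fin K)) (B : Finset (Fin n)),
      A.Nonempty ∧ ValidPair N Neib G H A B)
    (U : Finset (Fin K))
    (hGood : ∀ v ∉ U, ∃ i, v ∈ Neib i ∧
      batchRank (G i) (H i) (Neib i ∩ U) = (Neib i ∩ U).card) :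
    ∃ l : List (Fin K), l.Nodup ∧ l.toFinset = U ∧
      ∀ t (ht : t < l.length), ∃ i,
        l.get ⟨t, ht⟩ ∈ Neib i ∩ (U \ (l.take t).toFinset) ∧
        batchRank (G i) (H i) (Neib i ∩ (U \ (l.take t).toFinset))
          = (Neib i ∩ (U \ (l.take t).toFinset)).card := by
  classical
  induction U using Finset.strongInduction with
  | _ U ih =>
  rcases U.eq_empty_or_nonempty with hU | hU
  · subst hU
    exact ⟨[], by simp, by simp, by simp⟩
  by_cases hpeel : ∃ v ∈ U, ∃ i, v ∈ Neib i ∧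
      batchRank (G i) (H i) (Neib i ∩ U) = (Neib i ∩ U).card
  · obtain ⟨v, hvU, i, hvN, hrk⟩ := hpeel
    set U' := U.erase v with hU'
    have hsub : U' ⊂ U := Finset.erase_ssubset hvU
    have hGood' : ∀ w ∉ U', ∃ j, w ∈ Neib j ∧
        batchRank (G j) (H j) (Neib j ∩ U') = (Neib j ∩ U').card := by
      intro w hw
      by_cases hwU : w ∈ U
      · have hwv : w = v := by
          by_contra hne
          exact hw (Finset.mem_erase.mpr ⟨hne, hwU⟩)
        subst hwv
        exact ⟨i, hvN, batchRank_subset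
          (Finset.inter_subset_inter_left (Finset.erase_subset _ _)) hrk⟩
      · obtain ⟨j, hjN, hjrk⟩ := hGood w hwU
        exact ⟨j, hjN, batchRank_subset
          (Finset.inter_subset_inter_left (Finset.erase_subset _ _)) hjrk⟩
    obtain ⟨l', hnd', htf', hprop'⟩ := ih U' hsub hGood'
    have hvl' : v ∉ l' := by
      intro hv
      have : v ∈ U' := htf' ▸ List.mem_toFinset.mpr hv
      exact (Finset.notMem_erase v U) this
    refine ⟨v :: l', List.nodup_cons.mpr ⟨hvl', hnd'⟩, ?_, ?_⟩
    · rw [List.toFinset_cons, htf', hU', Finset.insert_erase hvU]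
    · intro t ht
      match t with
      | 0 =>
        refine ⟨i, ?_, ?_⟩
        · simpa using ⟨hvN, hvU⟩
        · simpa using hrk
      | (k+1) =>
        have hk : k < l'.length := by simpa using ht
        have hset : ∀ j : Fin n, Neib j ∩ (U \ ((v :: l').take (k+1)).toFinset)
            = Neib j ∩ (U' \ (l'.take k).toFinset) := by
          intro j
          ext x
          simp only [List.take, List.toFinset_cons, Finset.mem_inter, Finset.mem_sdiff,
            List.mem_toFinset, Finset.mem_insert, hU', Finset.mem_erase]
          tauto
        obtain ⟨j, hj1, hj2⟩ := hprop' k hk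
        refine ⟨j, ?_, ?_⟩
        · rw [hset j]
          simpa using hj1
        · rw [hset j]
          exact hj2
  · exfalso
    apply hstop
    push_neg at hpeel
    refine ⟨U, Finset.univ.filter (fun i => (Neib i ∩ U).Nonempty), hU, ?_, ?_, ?_⟩
    · intro v hv i hvN
      exact Finset.mem_filter.mpr ⟨Finset.mem_univ _, ⟨v, Finset.mem_inter.mpr ⟨hvN, hv⟩⟩⟩
    · intro i hi
      obtain ⟨w, hw⟩ := (Finset.mem_filter.mp hi).2
      obtain ⟨hw1, hw2⟩ := Finset.mem_inter.mp hw
      exact lt_of_le_of_ne (batchRank_le_card _ _ _) (hpeel w hw2 i hw1)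
    · intro v hv
      obtain ⟨i, hiN, hirk⟩ := hGood v hv
      refine ⟨i, ?_, hiN⟩
      intro hiB
      obtain ⟨w, hw⟩ := (Finset.mem_filter.mp hiB).2
      obtain ⟨hw1, hw2⟩ := Finset.mem_inter.mp hw
      exact hpeel w hw2 i hw1 hirk

/-- The Tanner graph of a BATS code cannot be reduced to the empty graph by
BP (peeling) decoding — i.e. there is no ordering `σ 0, σ 1, …` of the `K` VNs
such that for every step `t` some batch `i` satisfies
`σ t ∈ R i t` and `rank(G_i^{(R i t)} · H_i) = |R i t|`, where
`R i t = Neib(C_i) \ {σ s : s < t}` — if and only if the graph is a stopping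
graph, i.e. there exist a non-empty set `A` of VNs and a (possibly empty) set
`B` of B-CNs such that `(A, B)` is valid. -/
theorem bp_decoding_fails_iff_stopping_graph {F : Type*} [Field F] {K M n : ℕ}
    (hK : 0 < K) (hM : 0 < M) (hn : 0 < n)
    (N : Fin n → ℕ) (Neib : Fin n → Finset (Fin K))
    (G : Fin n → Matrix (Fin K) (Fin M) F)
    (H : (i : Fin n) → Matrix (Fin M) (Fin (N i)) F) :
    (¬ ∃ σ : Equiv.Perm (Fin K), ∀ t : Fin K, ∃ i : Fin n,
        σ t ∈ Neib i \ (Finset.univ.filter (fun s => s < t)).image σ ∧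
        batchRank (G i) (H i) (Neib i \ (Finset.univ.filter (fun s => s < t)).image σ)
          = (Neib i \ (Finset.univ.filter (fun s => s < t)).image σ).card) ↔
    ∃ (A : Finset (Fin K)) (B : Finset (Fin n)),
      A.Nonempty ∧ ValidPair N Neib G H A B := by
  classical
  constructor
  · intro hfail
    by_contra hstop
    apply hfail
    obtain ⟨l, hnd, htf, hprop⟩ := peel_list N Neib G H hstop Finset.univ
      (fun v hv => absurd (Finset.mem_univ v) hv)
    have hlen : l.length = K := by
      rw [← List.toFinset_card_of_nodup hnd, htf, Finset.card_univ, Fintype.card_fin]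
    set f : Fin K → Fin K := fun t => l.get (Fin.cast hlen.symm t) with hf
    have hinj : Function.Injective f :=
      (List.nodup_iff_injective_get.mp hnd).comp (Fin.cast_injective _)
    set σ : Equiv.Perm (Fin K) := Equiv.ofBijective f (Finite.injective_iff_bijective.mp hinj)
      with hσdef
    refine ⟨σ, ?_⟩
    intro t
    have himg : (Finset.univ.filter (fun s => s < t)).image σ = (l.take t.1).toFinset := by
      ext x
      simp only [Finset.mem_image, Finset.mem_filter, Finset.mem_univ, true_and,
        List.mem_toFinset]
      constructor
      · rintro ⟨s, hs, rfl⟩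
        have hsl : s.1 < l.length := by omega
        rw [List.mem_iff_getElem]
        refine ⟨s.1, ?_, ?_⟩
        · simpa [hlen] using hs
        · rw [List.getElem_take]
          rfl
      · intro hx
        rw [List.mem_iff_getElem] at hx
        obtain ⟨m, hm, hxm⟩ := hx
        have hmt : m < t.1 := by simpa [hlen] using hm
        have hmK : m < K := by omega
        refine ⟨⟨m, hmK⟩, hmt, ?_⟩
        rw [← hxm, List.getElem_take]
        rfl
    have hdiff : ∀ i : Fin n, Neib i \ (Finset.univ.filter (fun s => s < t)).image σ
        = Neib i ∩ (Finset.univ \ (l.take t.1).toFinset) := by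
      intro i
      rw [himg]
      ext x
      simp
    have htl : t.1 < l.length := by omega
    obtain ⟨i, hi1, hi2⟩ := hprop t.1 htl
    refine ⟨i, ?_, ?_⟩
    · rw [hdiff i]
      have : σ t = l.get ⟨t.1, htl⟩ := rfl
      rw [this]
      exact hi1
    · rw [hdiff i]
      exact hi2
  · rintro ⟨A, B, hA, h1, h2, h3⟩ ⟨σ, hσ⟩
    set T : Finset (Fin K) := Finset.univ.filter (fun t => σ t ∈ A) with hT
    have hTne : T.Nonempty := by
      obtain ⟨a, ha⟩ := hA
      exact ⟨σ.symm a, Finset.mem_filter.mpr ⟨Finset.mem_univ _, by simpa using ha⟩⟩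
    set t0 := T.min' hTne with ht0
    have ht0A : σ t0 ∈ A := (Finset.mem_filter.mp (T.min'_mem hTne)).2
    obtain ⟨i, hi1, hi2⟩ := hσ t0
    obtain ⟨hiN, himg⟩ := Finset.mem_sdiff.mp hi1
    have hiB : i ∈ B := h1 _ ht0A i hiN
    have hsub : Neib i ∩ A ⊆ Neib i \ (Finset.univ.filter (fun s => s < t0)).image σ := by
      intro x hx
      obtain ⟨hx1, hx2⟩ := Finset.mem_inter.mp hx
      refine Finset.mem_sdiff.mpr ⟨hx1, ?_⟩
      intro hximg
      obtain ⟨s, hs, rfl⟩ := Finset.mem_image.mp hximg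
      have hst0 : s < t0 := (Finset.mem_filter.mp hs).2
      have : t0 ≤ s := T.min'_le s (Finset.mem_filter.mpr ⟨Finset.mem_univ _, hx2⟩)
      exact absurd hst0 (not_lt.mpr this)
    have := batchRank_subset hsub hi2
    exact absurd (h2 i hiB) (by rw [this]; exact lt_irrefl _)
end

section
/- The joint Tanner graph of an LDPC-BATS code (with l ≥ 1) cannot be reduced to the empty graph by joint BP (peeling) decoding — i.e., there exists no ordering v_1,…,v_K of all K VNs such that each v_t is decodable after removing v_1,…,v_{t−1} — if and only if there exist a non-empty set A of VNs, with a := |A|, and a (possibly empty) set B of B-CNs such that: (C1) every B-CN neighbor of every VN in A lies in B; (C2) for every C ∈ B, |Neib(C) ∩ A| > rk(C^{(Neib(C) ∩ A)}); (C4) the set X := {V ∉ A : every B-CN neighbor of V lies in B} satisfies |X| ≤ ⌊(K−a)·l/r⌋, and (A, X) is an extended stopping set with maximal stopping set A. -/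
/-- `S` is a stopping set of the LDPC graph with L-CN neighbourhoods `LNeib`:
every L-CN having a neighbour in `S` has at least two neighbours in `S`. -/
def IsStoppingSet {K L : ℕ} (LNeib : Fin L → Finset (Fin K))
    (S : Finset (Fin K)) : Prop :=
  ∀ j : Fin L, (LNeib j ∩ S).Nonempty → 2 ≤ (LNeib j ∩ S).card

/-- `(A, A')` is an extended stopping set with maximal stopping set `A`:
`A` is a stopping set of the LDPC graph and every stopping set of the LDPC
graph contained in `A ∪ A'` is contained in `A`. -/
def IsExtStoppingSet {K L : ℕ} (LNeib : Fin L → Finset (Fin K))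
    (A A' : Finset (Fin K)) : Prop :=
  IsStoppingSet LNeib A ∧
    ∀ S : Finset (Fin K), IsStoppingSet LNeib S → S ⊆ A ∪ A' → S ⊆ A

lemma batchRank_subset_full {F : Type*} [Field F] {K M Ni : ℕ}
    (G : Matrix (Fin K) (Fin M) F) (H : Matrix (Fin M) (Fin Ni) F)
    {S' S : Finset (Fin K)} (hsub : S' ⊆ S)
    (h : batchRank G H S = S.card) : batchRank G H S' = S'.card := by
  classical
  set A : Matrix {x // x ∈ S} (Fin Ni) F :=
    (G.submatrix (fun v : {x // x ∈ S} => v.1) id) * H with hA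
  set emb : {x // x ∈ S'} → {x // x ∈ S} := fun v => ⟨v.1, hsub v.2⟩ with hemb
  have hinj : Function.Injective emb := by
    intro a b hab
    have := congrArg Subtype.val hab
    exact Subtype.ext this
  have hmat : (G.submatrix (fun v : {x // x ∈ S'} => v.1) id) * H = A.submatrix emb id := by
    ext v c
    simp [hA, Matrix.mul_apply, Matrix.submatrix_apply, hemb]
  -- A has full row rank, hence mulVecLin is surjective
  have hrank : A.rank = Fintype.card {x // x ∈ S} := by
    rw [Fintype.card_coe]; exact h
  have hsurj : Function.Surjective A.mulVecLin := by
    rw [← LinearMap.range_eq_top]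
    apply Submodule.eq_top_of_finrank_eq
    rw [← Matrix.rank, hrank, Module.finrank_pi]
  have hsurj' : Function.Surjective (A.submatrix emb id).mulVecLin := by
    have heq : (A.submatrix emb id).mulVecLin
        = (A.submatrix emb ⇑(Equiv.refl (Fin Ni))).mulVecLin := rfl
    rw [heq, Matrix.mulVecLin_submatrix emb (Equiv.refl (Fin Ni)) A]
    simp only [Equiv.refl_symm, LinearMap.coe_comp]
    apply Function.Surjective.comp
    · exact LinearMap.funLeft_surjective_of_injective F F emb hinj
    · apply Function.Surjective.comp hsurj
      exact (LinearEquiv.funCongrLeft F F (Equiv.refl (Fin Ni))).surjective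
  have : (A.submatrix emb id).rank = Fintype.card {x // x ∈ S'} := by
    rw [Matrix.rank, LinearMap.range_eq_top.mpr hsurj', finrank_top, Module.finrank_pi]
  rw [batchRank, hmat, this, Fintype.card_coe]

section Aux

variable {F : Type*} [Field F] {K M n L : ℕ}
  (N : Fin n → ℕ) (Neib : Fin n → Finset (Fin K))
  (G : Fin n → Matrix (Fin K) (Fin M) F)
  (H : (i : Fin n) → Matrix (Fin M) (Fin (N i)) F)
  (LNeib : Fin L → Finset (Fin K))

/-- decodability of `v` after removing `W`. -/
def decod (W : Finset (Fin K)) (v : Fin K) : Prop :=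
  (∃ i : Fin n, v ∈ Neib i \ W ∧
      batchRank (G i) (H i) (Neib i \ W) = (Neib i \ W).card) ∨
  (∃ j : Fin L, LNeib j \ W = {v})

noncomputable def peel : ℕ → Finset (Fin K)
  | 0 => ∅
  | (k+1) =>
    haveI := Classical.propDecidable
    if h : ∃ v, v ∉ peel k ∧ decod N Neib G H LNeib (peel k) v then
      insert h.choose (peel k)
    else peel k

lemma peel_zero : peel N Neib G H LNeib 0 = ∅ := rfl

lemma peel_succ_of_ex {k : ℕ}
    (h : ∃ v, v ∉ peel N Neib G H LNeib k ∧
      decod N Neib G H LNeib (peel N Neib G H LNeib k) v) :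
    ∃ v, v ∉ peel N Neib G H LNeib k ∧
      decod N Neib G H LNeib (peel N Neib G H LNeib k) v ∧
      peel N Neib G H LNeib (k+1) = insert v (peel N Neib G H LNeib k) := by
  refine ⟨h.choose, h.choose_spec.1, h.choose_spec.2, ?_⟩
  rw [peel, dif_pos h]
  ext x; simp [Finset.mem_insert]

lemma peel_succ_of_not {k : ℕ}
    (h : ¬ ∃ v, v ∉ peel N Neib G H LNeib k ∧
      decod N Neib G H LNeib (peel N Neib G H LNeib k) v) :
    peel N Neib G H LNeib (k+1) = peel N Neib G H LNeib k := by
  rw [peel, dif_neg h]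

lemma peel_subset_succ (k : ℕ) :
    peel N Neib G H LNeib k ⊆ peel N Neib G H LNeib (k+1) := by
  by_cases h : ∃ v, v ∉ peel N Neib G H LNeib k ∧
      decod N Neib G H LNeib (peel N Neib G H LNeib k) v
  · obtain ⟨v, -, -, hv⟩ := peel_succ_of_ex N Neib G H LNeib h
    rw [hv]; exact Finset.subset_insert _ _
  · rw [peel_succ_of_not N Neib G H LNeib h]

lemma peel_mono {k m : ℕ} (h : k ≤ m) :
    peel N Neib G H LNeib k ⊆ peel N Neib G H LNeib m := by
  induction m with
  | zero => simp [Nat.le_zero.mp h]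
  | succ m ih =>
    rcases Nat.le_succ_iff.mp h with h' | h'
    · exact (ih h').trans (peel_subset_succ N Neib G H LNeib m)
    · rw [h']

lemma peel_card_le (k : ℕ) : (peel N Neib G H LNeib k).card ≤ k := by
  induction k with
  | zero => simp [peel_zero]
  | succ k ih =>
    by_cases h : ∃ v, v ∉ peel N Neib G H LNeib k ∧
        decod N Neib G H LNeib (peel N Neib G H LNeib k) v
    · obtain ⟨v, -, -, hv⟩ := peel_succ_of_ex N Neib G H LNeib h
      rw [hv]
      exact (Finset.card_insert_le _ _).trans (Nat.succ_le_succ ih)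
    · rw [peel_succ_of_not N Neib G H LNeib h]
      exact ih.trans (Nat.le_succ k)

lemma peel_new {k : ℕ} {v : Fin K} (h1 : v ∉ peel N Neib G H LNeib k)
    (h2 : v ∈ peel N Neib G H LNeib (k+1)) :
    decod N Neib G H LNeib (peel N Neib G H LNeib k) v ∧
      peel N Neib G H LNeib (k+1) = insert v (peel N Neib G H LNeib k) := by
  by_cases h : ∃ w, w ∉ peel N Neib G H LNeib k ∧
      decod N Neib G H LNeib (peel N Neib G H LNeib k) w
  · obtain ⟨w, hw1, hw2, hw3⟩ := peel_succ_of_ex N Neib G H LNeib h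
    rw [hw3] at h2
    rcases Finset.mem_insert.mp h2 with h' | h'
    · subst h'; exact ⟨hw2, hw3⟩
    · exact absurd h' h1
  · rw [peel_succ_of_not N Neib G H LNeib h] at h2
    exact absurd h2 h1

end Aux

lemma stopping_no_perm {F : Type*} [Field F] {K M n L : ℕ}
    (N : Fin n → ℕ) (Neib : Fin n → Finset (Fin K))
    (G : Fin n → Matrix (Fin K) (Fin M) F)
    (H : (i : Fin n) → Matrix (Fin M) (Fin (N i)) F)
    (LNeib : Fin L → Finset (Fin K))
    (A : Finset (Fin K)) (B : Finset (Fin n)) (hA : A.Nonempty)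
    (hC1 : ∀ v ∈ A, ∀ i : Fin n, v ∈ Neib i → i ∈ B)
    (hC2 : ∀ i ∈ B, batchRank (G i) (H i) (Neib i ∩ A) < (Neib i ∩ A).card)
    (hstop : IsStoppingSet LNeib A)
    (σ : Equiv.Perm (Fin K))
    (hσ : ∀ t : Fin K,
        (∃ i : Fin n,
          σ t ∈ Neib i \ (Finset.univ.filter (fun s => s < t)).image σ ∧
          batchRank (G i) (H i) (Neib i \ (Finset.univ.filter (fun s => s < t)).image σ)
            = (Neib i \ (Finset.univ.filter (fun s => s < t)).image σ).card) ∨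
        (∃ j : Fin L,
          LNeib j \ (Finset.univ.filter (fun s => s < t)).image σ = {σ t})) :
    False := by
  classical
  obtain ⟨v0, hv0⟩ := hA
  have hTne : (Finset.univ.filter (fun t => σ t ∈ A)).Nonempty :=
    ⟨σ.symm v0, by simp [hv0]⟩
  set t := (Finset.univ.filter (fun t => σ t ∈ A)).min' hTne with ht
  have htA : σ t ∈ A := by
    have := Finset.min'_mem _ hTne
    simpa using this
  set W := (Finset.univ.filter (fun s => s < t)).image σ with hW
  have hWA : ∀ w ∈ W, w ∉ A := by
    intro w hw hwA
    obtain ⟨s, hs, rfl⟩ := Finset.mem_image.mp hw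
    have hs' : s < t := (Finset.mem_filter.mp hs).2
    have : t ≤ s := Finset.min'_le _ _ (by simp [hwA])
    exact absurd hs' (not_lt.mpr this)
  rcases hσ t with ⟨i, hvmem, hrank⟩ | ⟨j, hj⟩
  · have hiB : i ∈ B := hC1 _ htA i (Finset.mem_sdiff.mp hvmem).1
    have hsub : Neib i ∩ A ⊆ Neib i \ W := by
      intro x hx
      rcases Finset.mem_inter.mp hx with ⟨hx1, hx2⟩
      exact Finset.mem_sdiff.mpr ⟨hx1, fun hxW => hWA x hxW hx2⟩
    have := batchRank_subset_full (G i) (H i) hsub hrank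
    exact absurd this (Nat.ne_of_lt (hC2 i hiB))
  · have hmem : σ t ∈ LNeib j ∩ A := by
      have : σ t ∈ LNeib j \ W := hj ▸ Finset.mem_singleton_self _
      exact Finset.mem_inter.mpr ⟨(Finset.mem_sdiff.mp this).1, htA⟩
    have hsub : LNeib j ∩ A ⊆ {σ t} := by
      intro x hx
      rcases Finset.mem_inter.mp hx with ⟨hx1, hx2⟩
      rw [← hj]
      exact Finset.mem_sdiff.mpr ⟨hx1, fun hxW => hWA x hxW hx2⟩
    have hcard : (LNeib j ∩ A).card = 1 :=
      le_antisymm (by simpa using Finset.card_le_card hsub)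
        (Finset.card_pos.mpr ⟨_, hmem⟩)
    have := hstop j ⟨_, hmem⟩
    omega

lemma perm_of_complete {F : Type*} [Field F] {K M n L : ℕ}
    (N : Fin n → ℕ) (Neib : Fin n → Finset (Fin K))
    (G : Fin n → Matrix (Fin K) (Fin M) F)
    (H : (i : Fin n) → Matrix (Fin M) (Fin (N i)) F)
    (LNeib : Fin L → Finset (Fin K))
    (hall : ∀ k, k < K → ∃ v, v ∉ peel N Neib G H LNeib k ∧
        decod N Neib G H LNeib (peel N Neib G H LNeib k) v) :
    ∃ σ : Equiv.Perm (Fin K), ∀ t : Fin K,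
        (∃ i : Fin n,
          σ t ∈ Neib i \ (Finset.univ.filter (fun s => s < t)).image σ ∧
          batchRank (G i) (H i) (Neib i \ (Finset.univ.filter (fun s => s < t)).image σ)
            = (Neib i \ (Finset.univ.filter (fun s => s < t)).image σ).card) ∨
        (∃ j : Fin L,
          LNeib j \ (Finset.univ.filter (fun s => s < t)).image σ = {σ t}) := by
  classical
  set P := peel N Neib G H LNeib with hP
  have hstep : ∀ t : Fin K, ∃ v, v ∉ P t.val ∧ decod N Neib G H LNeib (P t.val) v ∧
      P (t.val + 1) = insert v (P t.val) :=
    fun t => peel_succ_of_ex N Neib G H LNeib (hall t.val t.isLt)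
  choose g hg1 hg2 hg3 using hstep
  -- P m = image of g over indices < m
  have himg : ∀ m : ℕ, m ≤ K →
      P m = Finset.image g (Finset.univ.filter (fun s : Fin K => s.val < m)) := by
    intro m
    induction m with
    | zero =>
      intro _
      simp [hP, peel_zero]
    | succ m ih =>
      intro hm
      have hmK : m < K := hm
      have hfil : (Finset.univ.filter (fun s : Fin K => s.val < m + 1))
          = insert (⟨m, hmK⟩ : Fin K) (Finset.univ.filter (fun s : Fin K => s.val < m)) := by
        ext s
        simp only [Finset.mem_filter, Finset.mem_univ, true_and, Finset.mem_insert]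
        constructor
        · intro hs
          rcases Nat.lt_succ_iff_lt_or_eq.mp hs with h | h
          · exact Or.inr h
          · exact Or.inl (Fin.ext h)
        · rintro (rfl | h)
          · exact Nat.lt_succ_self m
          · exact Nat.lt_succ_of_lt h
      rw [hfil, Finset.image_insert, ← ih (Nat.le_of_lt hmK)]
      exact hg3 ⟨m, hmK⟩
  have hginj : Function.Injective g := by
    intro s t hst
    by_contra hne
    rcases Ne.lt_or_gt (fun h : s = t => hne h) with h | h
    · have : g s ∈ P t.val := by
        have h1 : g s ∈ P (s.val + 1) := by rw [hg3 s]; exact Finset.mem_insert_self _ _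
        exact peel_mono N Neib G H LNeib (by exact h) h1
      rw [hst] at this
      exact hg1 t this
    · have : g t ∈ P s.val := by
        have h1 : g t ∈ P (t.val + 1) := by rw [hg3 t]; exact Finset.mem_insert_self _ _
        exact peel_mono N Neib G H LNeib (by exact h) h1
      rw [← hst] at this
      exact hg1 s this
  have hgbij : Function.Bijective g := (Finite.injective_iff_bijective).mp hginj
  refine ⟨Equiv.ofBijective g hgbij, ?_⟩
  intro t
  have hWeq : (Finset.univ.filter (fun s => s < t)).image (Equiv.ofBijective g hgbij)
      = P t.val := by
    rw [himg t.val (Nat.le_of_lt t.isLt)]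
    have hfil : (Finset.univ.filter (fun s => s < t))
        = (Finset.univ.filter (fun s : Fin K => s.val < t.val)) := by
      ext s
      simp only [Finset.mem_filter, Finset.mem_univ, true_and]
      exact Iff.rfl
    rw [hfil]
    exact Finset.image_congr (fun x _ => rfl)
  have hg2t := hg2 t
  rw [← hWeq] at hg2t
  exact hg2t

lemma stuck_gives_stopping {F : Type*} [Field F] {K M n L l r : ℕ}
    (hr : 0 < r) (hL : 0 < L)
    (N : Fin n → ℕ) (Neib : Fin n → Finset (Fin K))
    (G : Fin n → Matrix (Fin K) (Fin M) F)
    (H : (i : Fin n) → Matrix (Fin M) (Fin (N i)) F)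
    (LNeib : Fin L → Finset (Fin K))
    (hLdeg : ∀ j : Fin L, (LNeib j).card = r)
    (hVdeg : ∀ v : Fin K, (Finset.univ.filter (fun j => v ∈ LNeib j)).card = l)
    {k : ℕ} (hkK : k < K)
    (hstuck : ∀ v, v ∉ peel N Neib G H LNeib k →
      ¬ decod N Neib G H LNeib (peel N Neib G H LNeib k) v) :
    ∃ (A : Finset (Fin K)) (B : Finset (Fin n)),
      A.Nonempty ∧
      (∀ v ∈ A, ∀ i : Fin n, v ∈ Neib i → i ∈ B) ∧
      (∀ i ∈ B, batchRank (G i) (H i) (Neib i ∩ A) < (Neib i ∩ A).card) ∧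
      (Finset.univ.filter
          (fun v : Fin K => v ∉ A ∧ ∀ i : Fin n, v ∈ Neib i → i ∈ B)).card
        ≤ (K - A.card) * l / r ∧
      IsExtStoppingSet LNeib A
        (Finset.univ.filter
          (fun v : Fin K => v ∉ A ∧ ∀ i : Fin n, v ∈ Neib i → i ∈ B)) := by
  classical
  set P := peel N Neib G H LNeib with hPdef
  set A : Finset (Fin K) := Finset.univ \ P k with hAdef
  set B : Finset (Fin n) :=
    Finset.univ.filter (fun i => (Neib i ∩ A).Nonempty) with hBdef
  have hA_mem : ∀ v, v ∈ A ↔ v ∉ P k := by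
    intro v; simp [hAdef]
  have hPkcard : (P k).card ≤ k := peel_card_le N Neib G H LNeib k
  -- A is nonempty
  have hAne : A.Nonempty := by
    rw [hAdef]
    rw [Finset.sdiff_nonempty]
    intro hsub
    have : (Finset.univ : Finset (Fin K)).card ≤ (P k).card := Finset.card_le_card hsub
    rw [Finset.card_univ, Fintype.card_fin] at this
    omega
  -- C1
  have hC1 : ∀ v ∈ A, ∀ i : Fin n, v ∈ Neib i → i ∈ B := by
    intro v hv i hvi
    simp only [hBdef, Finset.mem_filter, Finset.mem_univ, true_and]
    exact ⟨v, Finset.mem_inter.mpr ⟨hvi, hv⟩⟩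
  have hAP : ∀ {m : ℕ}, m ≤ k → ∀ v ∈ A, v ∉ P m := by
    intro m hm v hv hvm
    exact (hA_mem v).mp hv (peel_mono N Neib G H LNeib hm hvm)
  have hinter : ∀ i : Fin n, Neib i ∩ A = Neib i \ P k := by
    intro i
    ext x
    simp only [Finset.mem_inter, Finset.mem_sdiff, hA_mem]
  -- C2
  have hC2 : ∀ i ∈ B, batchRank (G i) (H i) (Neib i ∩ A) < (Neib i ∩ A).card := by
    intro i hi
    obtain ⟨v, hv⟩ := (Finset.mem_filter.mp hi).2
    rcases Finset.mem_inter.mp hv with ⟨hv1, hv2⟩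
    have hvP : v ∉ P k := (hA_mem v).mp hv2
    have hnd := hstuck v hvP
    have hne : batchRank (G i) (H i) (Neib i \ P k) ≠ (Neib i \ P k).card := by
      intro heq
      exact hnd (Or.inl ⟨i, Finset.mem_sdiff.mpr ⟨hv1, hvP⟩, heq⟩)
    rw [hinter i]
    exact lt_of_le_of_ne (batchRank_le_card _ _ _) hne
  -- A is a stopping set
  have hstopA : IsStoppingSet LNeib A := by
    intro j hj
    by_contra hlt
    push_neg at hlt
    obtain ⟨v, hv⟩ := hj
    have hcard1 : (LNeib j ∩ A).card = 1 := by
      have : 0 < (LNeib j ∩ A).card := Finset.card_pos.mpr ⟨v, hv⟩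
      omega
    obtain ⟨w, hw⟩ := Finset.card_eq_one.mp hcard1
    have hwA : w ∈ A := by
      have : w ∈ LNeib j ∩ A := hw ▸ Finset.mem_singleton_self w
      exact (Finset.mem_inter.mp this).2
    have hdiff : LNeib j \ P k = {w} := by
      have : LNeib j \ P k = LNeib j ∩ A := by
        ext x
        simp only [Finset.mem_inter, Finset.mem_sdiff, hA_mem]
      rw [this, hw]
    exact hstuck w ((hA_mem w).mp hwA) (Or.inr ⟨j, hdiff⟩)
  -- the first time a vertex is decoded
  set mf : Fin K → ℕ := fun v => sInf {m | v ∈ P m} with hmf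
  have hmf_mem : ∀ v ∈ P k, v ∈ P (mf v) := by
    intro v hv
    have hne : {m | v ∈ P m}.Nonempty := ⟨k, hv⟩
    exact Nat.sInf_mem hne
  have hmf_le : ∀ v (m : ℕ), v ∈ P m → mf v ≤ m := by
    intro v m hv
    exact Nat.sInf_le hv
  have hmf_pos : ∀ v ∈ P k, 1 ≤ mf v := by
    intro v hv
    by_contra h
    have h0 : mf v = 0 := by omega
    have := hmf_mem v hv
    rw [h0] at this
    simp [hPdef, peel_zero] at this
  have hmf_notmem : ∀ v ∈ P k, v ∉ P (mf v - 1) := by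
    intro v hv hvm
    have h1 : mf v ≤ mf v - 1 := hmf_le v _ hvm
    have h2 := hmf_pos v hv
    omega
  have hmf_step : ∀ v ∈ P k,
      decod N Neib G H LNeib (P (mf v - 1)) v ∧
        P (mf v) = insert v (P (mf v - 1)) := by
    intro v hv
    have h1 := hmf_notmem v hv
    have h2 : v ∈ P ((mf v - 1) + 1) := by
      have := hmf_pos v hv
      have heq : mf v - 1 + 1 = mf v := by omega
      rw [heq]
      exact hmf_mem v hv
    have := peel_new N Neib G H LNeib h1 h2
    have heq : mf v - 1 + 1 = mf v := by
      have := hmf_pos v hv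
      omega
    rw [heq] at this
    exact this
  have hmf_le_k : ∀ v ∈ P k, mf v ≤ k := fun v hv => hmf_le v k hv
  -- a vertex all of whose batch neighbours are in B can never be decoded by a batch
  have hnobatch : ∀ (m : ℕ), m ≤ k → ∀ v : Fin K, (∀ i : Fin n, v ∈ Neib i → i ∈ B) →
      ¬ ∃ i : Fin n, v ∈ Neib i \ P m ∧
        batchRank (G i) (H i) (Neib i \ P m) = (Neib i \ P m).card := by
    rintro m hm v hvB ⟨i, hvi, hrank⟩
    have hiB : i ∈ B := hvB i (Finset.mem_sdiff.mp hvi).1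
    have hsub : Neib i ∩ A ⊆ Neib i \ P m := by
      intro x hx
      rcases Finset.mem_inter.mp hx with ⟨hx1, hx2⟩
      exact Finset.mem_sdiff.mpr ⟨hx1, hAP hm x hx2⟩
    have := batchRank_subset_full (G i) (H i) hsub hrank
    exact absurd this (Nat.ne_of_lt (hC2 i hiB))
  -- every vertex of the "X" set was decoded by an L-CN
  have hLstep : ∀ v ∈ P k, (∀ i : Fin n, v ∈ Neib i → i ∈ B) →
      ∃ j : Fin L, LNeib j \ P (mf v - 1) = {v} := by
    intro v hv hvB
    rcases (hmf_step v hv).1 with hbatch | hL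
    · exact absurd hbatch
        (hnobatch (mf v - 1) (by have := hmf_le_k v hv; omega) v hvB)
    · exact hL
  set X : Finset (Fin K) := Finset.univ.filter
      (fun v : Fin K => v ∉ A ∧ ∀ i : Fin n, v ∈ Neib i → i ∈ B) with hXdef
  have hX_mem : ∀ v, v ∈ X ↔ (v ∈ P k ∧ ∀ i : Fin n, v ∈ Neib i → i ∈ B) := by
    intro v
    simp only [hXdef, Finset.mem_filter, Finset.mem_univ, true_and, hA_mem, not_not]
  -- extended stopping set property
  have hext : IsExtStoppingSet LNeib A X := by
    refine ⟨hstopA, ?_⟩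
    intro S hS hSsub
    by_contra hnsub
    obtain ⟨w0, hw0S, hw0A⟩ := Finset.not_subset.mp hnsub
    have hSAX : ∀ w ∈ S \ A, w ∈ X := by
      intro w hw
      rcases Finset.mem_sdiff.mp hw with ⟨hw1, hw2⟩
      rcases Finset.mem_union.mp (hSsub hw1) with h | h
      · exact absurd h hw2
      · exact h
    have hSAne : (S \ A).Nonempty := ⟨w0, Finset.mem_sdiff.mpr ⟨hw0S, hw0A⟩⟩
    obtain ⟨w, hwSA, hwmin⟩ := Finset.exists_min_image (S \ A) mf hSAne
    have hwX : w ∈ X := hSAX w hwSA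
    have hwPk : w ∈ P k := ((hX_mem w).mp hwX).1
    have hwB : ∀ i : Fin n, w ∈ Neib i → i ∈ B := ((hX_mem w).mp hwX).2
    obtain ⟨j, hj⟩ := hLstep w hwPk hwB
    have hwLj : w ∈ LNeib j := by
      have : w ∈ LNeib j \ P (mf w - 1) := hj ▸ Finset.mem_singleton_self w
      exact (Finset.mem_sdiff.mp this).1
    have hwS : w ∈ S := (Finset.mem_sdiff.mp hwSA).1
    have h2 : 2 ≤ (LNeib j ∩ S).card :=
      hS j ⟨w, Finset.mem_inter.mpr ⟨hwLj, hwS⟩⟩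
    obtain ⟨w', hw'mem, hw'ne⟩ : ∃ w' ∈ LNeib j ∩ S, w' ≠ w := by
      obtain ⟨a, ha, b, hb, hab⟩ := Finset.one_lt_card.mp (by omega : 1 < (LNeib j ∩ S).card)
      by_cases haw : a = w
      · exact ⟨b, hb, by rw [← haw]; exact fun h => hab h.symm⟩
      · exact ⟨a, ha, haw⟩
    rcases Finset.mem_inter.mp hw'mem with ⟨hw'L, hw'S⟩
    have hw'P : w' ∈ P (mf w - 1) := by
      by_contra h
      have : w' ∈ LNeib j \ P (mf w - 1) := Finset.mem_sdiff.mpr ⟨hw'L, h⟩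
      rw [hj] at this
      exact hw'ne (Finset.mem_singleton.mp this)
    have hw'Pk : w' ∈ P k := by
      refine peel_mono N Neib G H LNeib ?_ hw'P
      have := hmf_le_k w hwPk
      omega
    have hw'A : w' ∉ A := fun h => (hA_mem w').mp h hw'Pk
    have hw'SA : w' ∈ S \ A := Finset.mem_sdiff.mpr ⟨hw'S, hw'A⟩
    have hle := hwmin w' hw'SA
    have hlt : mf w' < mf w := by
      have h1 := hmf_le w' (mf w - 1) hw'P
      have h2 := hmf_pos w hwPk
      omega
    omega
  -- the cardinality bound
  haveI : Nonempty (Fin L) := ⟨⟨0, hL⟩⟩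
  have hXstep : ∀ v ∈ X, ∃ j : Fin L, LNeib j \ P (mf v - 1) = {v} := by
    intro v hv
    exact hLstep v ((hX_mem v).mp hv).1 ((hX_mem v).mp hv).2
  choose! φ hφ using hXstep
  set J0 : Finset (Fin L) := Finset.univ.filter (fun j => LNeib j ∩ A = ∅) with hJ0def
  have hmaps : ∀ v ∈ X, φ v ∈ J0 := by
    intro v hv
    simp only [hJ0def, Finset.mem_filter, Finset.mem_univ, true_and]
    have hvPk : v ∈ P k := ((hX_mem v).mp hv).1
    have hsub : LNeib (φ v) ∩ A ⊆ {v} := by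
      intro x hx
      rcases Finset.mem_inter.mp hx with ⟨hx1, hx2⟩
      rw [← hφ v hv]
      refine Finset.mem_sdiff.mpr ⟨hx1, ?_⟩
      apply hAP ?_ x hx2
      have := hmf_le_k v hvPk
      omega
    have hvA : v ∉ A := fun h => (hA_mem v).mp h hvPk
    rw [Finset.eq_empty_iff_forall_notMem]
    intro x hx
    have := Finset.mem_singleton.mp (hsub hx)
    subst this
    exact hvA (Finset.mem_inter.mp hx).2
  have hinjX : Set.InjOn φ X := by
    intro v hv v' hv' heq
    have hv0 := hv
    have hv'0 := hv'
    rw [Finset.mem_coe] at hv0 hv'0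
    have hvPk : v ∈ P k := ((hX_mem v).mp hv0).1
    have hv'Pk : v' ∈ P k := ((hX_mem v').mp hv'0).1
    have hj := hφ v hv0
    have hj' := hφ v' hv'0
    rw [heq] at hj
    by_contra hne
    rcases Nat.lt_trichotomy (mf v) (mf v') with hlt | hmeq | hlt
    · -- v decoded strictly earlier: v' ∈ LNeib (φ v') and v' ∉ {v}, so v' ∈ P (mf v - 1)
      have hv'L : v' ∈ LNeib (φ v') := by
        have : v' ∈ LNeib (φ v') \ P (mf v' - 1) := hj' ▸ Finset.mem_singleton_self v'
        exact (Finset.mem_sdiff.mp this).1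
      have hv'P : v' ∈ P (mf v - 1) := by
        by_contra h
        have : v' ∈ LNeib (φ v') \ P (mf v - 1) := Finset.mem_sdiff.mpr ⟨hv'L, h⟩
        rw [hj] at this
        exact hne (Finset.mem_singleton.mp this).symm
      have := hmf_le v' (mf v - 1) hv'P
      have := hmf_pos v hvPk
      omega
    · -- same step: both are the unique new element
      have hins := (hmf_step v hvPk).2
      have hv'in : v' ∈ P (mf v) := by rw [hmeq]; exact hmf_mem v' hv'Pk
      rw [hins] at hv'in
      rcases Finset.mem_insert.mp hv'in with h | h
      · exact hne h.symm
      · have := hmf_notmem v' hv'Pk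
        rw [← hmeq] at this
        exact this h
    · have hvL : v ∈ LNeib (φ v') := by
        have : v ∈ LNeib (φ v') \ P (mf v - 1) := hj ▸ Finset.mem_singleton_self v
        exact (Finset.mem_sdiff.mp this).1
      have hvP : v ∈ P (mf v' - 1) := by
        by_contra h
        have : v ∈ LNeib (φ v') \ P (mf v' - 1) := Finset.mem_sdiff.mpr ⟨hvL, h⟩
        rw [hj'] at this
        exact hne (Finset.mem_singleton.mp this)
      have := hmf_le v (mf v' - 1) hvP
      have := hmf_pos v' hv'Pk
      omega
  have hcardXJ : X.card ≤ J0.card :=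
    Finset.card_le_card_of_injOn φ hmaps hinjX
  -- double counting: J0.card * r ≤ (K - A.card) * l
  have hdouble : ∀ T : Finset (Fin K),
      ∑ j : Fin L, (LNeib j ∩ T).card
        = ∑ v ∈ T, (Finset.univ.filter (fun j => v ∈ LNeib j)).card := by
    intro T
    have h1 : ∀ j : Fin L, (LNeib j ∩ T).card
        = ∑ v ∈ T, if v ∈ LNeib j then 1 else 0 := by
      intro j
      rw [← Finset.card_filter]
      congr 1
      ext x
      simp [Finset.mem_inter, and_comm]
    have h2 : ∀ v : Fin K, (Finset.univ.filter (fun j => v ∈ LNeib j)).card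
        = ∑ j : Fin L, if v ∈ LNeib j then 1 else 0 := by
      intro v
      rw [Finset.card_filter]
    calc ∑ j : Fin L, (LNeib j ∩ T).card
        = ∑ j : Fin L, ∑ v ∈ T, if v ∈ LNeib j then 1 else 0 := by
          exact Finset.sum_congr rfl (fun j _ => h1 j)
      _ = ∑ v ∈ T, ∑ j : Fin L, if v ∈ LNeib j then 1 else 0 := Finset.sum_comm
      _ = ∑ v ∈ T, (Finset.univ.filter (fun j => v ∈ LNeib j)).card := by
          exact Finset.sum_congr rfl (fun v _ => (h2 v).symm)
  have hJ0count : J0.card * r ≤ (K - A.card) * l := by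
    have hKA : K - A.card = (P k).card := by
      have hAcard : A.card = K - (P k).card := by
        rw [hAdef, Finset.card_sdiff_of_subset (Finset.subset_univ _), Finset.card_univ,
          Fintype.card_fin]
      have hle : (P k).card ≤ K := by
        simpa using Finset.card_le_univ (P k)
      omega
    have hall : ∀ j ∈ J0, (LNeib j ∩ P k).card = r := by
      intro j hj
      have hj0 : LNeib j ∩ A = ∅ := (Finset.mem_filter.mp hj).2
      have heq : LNeib j ∩ P k = LNeib j := by
        ext x
        simp only [Finset.mem_inter, and_iff_left_iff_imp]
        intro hx
        by_contra hxP
        have hxA : x ∈ A := (hA_mem x).mpr hxP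
        have : x ∈ LNeib j ∩ A := Finset.mem_inter.mpr ⟨hx, hxA⟩
        rw [hj0] at this
        exact absurd this (Finset.notMem_empty x)
      rw [heq, hLdeg j]
    have hstep1 : ∑ j ∈ J0, (LNeib j ∩ P k).card = J0.card * r := by
      calc ∑ j ∈ J0, (LNeib j ∩ P k).card = ∑ _j ∈ J0, r := Finset.sum_congr rfl hall
        _ = J0.card * r := by rw [Finset.sum_const, smul_eq_mul]
    have hstep2 : ∑ j ∈ J0, (LNeib j ∩ P k).card
        ≤ ∑ j : Fin L, (LNeib j ∩ P k).card :=
      Finset.sum_le_sum_of_subset (Finset.subset_univ J0)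
    have hstep3 : ∑ j : Fin L, (LNeib j ∩ P k).card = (P k).card * l := by
      rw [hdouble (P k)]
      calc ∑ v ∈ P k, (Finset.univ.filter (fun j => v ∈ LNeib j)).card
          = ∑ _v ∈ P k, l := Finset.sum_congr rfl (fun v _ => hVdeg v)
        _ = (P k).card * l := by rw [Finset.sum_const, smul_eq_mul]
    rw [← hstep1, hKA]
    rw [hstep3] at hstep2
    exact hstep2
  have hXbound : X.card ≤ (K - A.card) * l / r := by
    rw [Nat.le_div_iff_mul_le hr]
    calc X.card * r ≤ J0.card * r := Nat.mul_le_mul_right r hcardXJ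
      _ ≤ (K - A.card) * l := hJ0count
  exact ⟨A, B, hAne, hC1, hC2, hXbound, hext⟩

/-- The joint Tanner graph of an LDPC-BATS code (with `l ≥ 1`) cannot be
reduced to the empty graph by joint BP (peeling) decoding — there is no
ordering `σ` of the `K` VNs such that each `σ t` is decodable (by a batch or
by a degree-one residual L-CN) after removing `σ s`, `s < t` — if and only if
there exist a non-empty set `A` of VNs and a (possibly empty) set `B` of
B-CNs satisfying (C1), (C2) and (C4). -/
theorem ldpc_bats_bp_fails_iff_stopping_graph {F : Type*} [Field F]
    {K M n l r : ℕ}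
    (hK : 0 < K) (hM : 0 < M) (hn : 0 < n) (hl : 1 ≤ l) (hr : 0 < r)
    (hdvd : r ∣ K * l)
    (N : Fin n → ℕ) (Neib : Fin n → Finset (Fin K))
    (G : Fin n → Matrix (Fin K) (Fin M) F)
    (H : (i : Fin n) → Matrix (Fin M) (Fin (N i)) F)
    (LNeib : Fin (K * l / r) → Finset (Fin K))
    (hLdeg : ∀ j : Fin (K * l / r), (LNeib j).card = r)
    (hVdeg : ∀ v : Fin K, (Finset.univ.filter (fun j => v ∈ LNeib j)).card = l) :
    (¬ ∃ σ : Equiv.Perm (Fin K), ∀ t : Fin K,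
        (∃ i : Fin n,
          σ t ∈ Neib i \ (Finset.univ.filter (fun s => s < t)).image σ ∧
          batchRank (G i) (H i) (Neib i \ (Finset.univ.filter (fun s => s < t)).image σ)
            = (Neib i \ (Finset.univ.filter (fun s => s < t)).image σ).card) ∨
        (∃ j : Fin (K * l / r),
          LNeib j \ (Finset.univ.filter (fun s => s < t)).image σ = {σ t})) ↔
    ∃ (A : Finset (Fin K)) (B : Finset (Fin n)),
      A.Nonempty ∧
      (∀ v ∈ A, ∀ i : Fin n, v ∈ Neib i → i ∈ B) ∧
      (∀ i ∈ B, batchRank (G i) (H i) (Neib i ∩ A) < (Neib i ∩ A).card) ∧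
      (Finset.univ.filter
          (fun v : Fin K => v ∉ A ∧ ∀ i : Fin n, v ∈ Neib i → i ∈ B)).card
        ≤ (K - A.card) * l / r ∧
      IsExtStoppingSet LNeib A
        (Finset.univ.filter
          (fun v : Fin K => v ∉ A ∧ ∀ i : Fin n, v ∈ Neib i → i ∈ B)) := by
  classical
  have hLpos : 0 < K * l / r := by
    have h1 : 0 < K * l := Nat.mul_pos hK hl
    exact Nat.div_pos (Nat.le_of_dvd h1 hdvd) hr
  by_cases hall : ∀ k, k < K → ∃ v, v ∉ peel N Neib G H LNeib k ∧
      decod N Neib G H LNeib (peel N Neib G H LNeib k) v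
  · obtain ⟨σ, hσ⟩ := perm_of_complete N Neib G H LNeib hall
    constructor
    · intro hno
      exact absurd ⟨σ, hσ⟩ hno
    · rintro ⟨A, B, hA, hC1, hC2, -, hext⟩ _
      exact stopping_no_perm N Neib G H LNeib A B hA hC1 hC2 hext.1 σ hσ

  · push_neg at hall
    obtain ⟨k, hkK, hstuck⟩ := hall
    have hRHS := stuck_gives_stopping hr hLpos N Neib G H LNeib hLdeg hVdeg hkK hstuck
    constructor
    · intro _
      exact hRHS
    · intro _
      rintro ⟨σ, hσ⟩
      obtain ⟨A, B, hA, hC1, hC2, -, hext⟩ := hRHS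
      exact stopping_no_perm N Neib G H LNeib A B hA hC1 hC2 hext.1 σ hσ
end

section
/- For every j ∈ {0,…,m}, the total weight of all s-tuples (A_1,…,A_s) of subsets of U whose union A_1 ∪ ⋯ ∪ A_s has exactly j elements equals C(m,j) · Σ_{k=0}^{j} (−1)^{j−k} C(j,k) (Σ_{d=0}^{k} β_d C(k,d)/C(m,d))^s. In particular, when (β_0,…,β_m) is a probability distribution and S_1,…,S_s are independent random subsets of U, each drawn by sampling a size d with probability β_d and then a uniformly random d-element subset, Pr{|S_1 ∪ ⋯ ∪ S_s| = j} equals this expression. -/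
private lemma neg_one_pow_sub_real (a b : ℕ) (h : b ≤ a) :
    (-1 : ℝ) ^ (a - b) = (-1) ^ a * (-1) ^ b := by
  have h2 : (-1 : ℝ) ^ b * (-1) ^ b = 1 := by
    rw [← pow_add]; exact Even.neg_one_pow ⟨b, rfl⟩
  calc (-1 : ℝ) ^ (a - b) = (-1) ^ (a - b) * ((-1) ^ b * (-1) ^ b) := by rw [h2, mul_one]
    _ = ((-1) ^ (a - b) * (-1) ^ b) * (-1) ^ b := by ring
    _ = (-1) ^ (a - b + b) * (-1) ^ b := by rw [pow_add]
    _ = (-1) ^ a * (-1) ^ b := by rw [Nat.sub_add_cancel h]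

private lemma alt_sum_powerset {α : Type*} [DecidableEq α] (T : Finset α) :
    ∑ E ∈ T.powerset, (-1 : ℝ) ^ (T.card - E.card) = if T = ∅ then 1 else 0 := by
  have h1 : ∑ E ∈ T.powerset, (-1 : ℝ) ^ (T.card - E.card)
      = (-1) ^ T.card * ∑ E ∈ T.powerset, (-1 : ℝ) ^ E.card := by
    rw [Finset.mul_sum]
    refine Finset.sum_congr rfl fun E hE => ?_
    exact neg_one_pow_sub_real _ _ (Finset.card_le_card (Finset.mem_powerset.1 hE))
  have h2 : ∑ E ∈ T.powerset, (-1 : ℝ) ^ E.card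
      = ((∑ E ∈ T.powerset, (-1 : ℤ) ^ E.card : ℤ) : ℝ) := by push_cast; rfl
  rw [h1, h2, Finset.sum_powerset_neg_one_pow_card]
  split_ifs with h
  · subst h; simp
  · simp

private lemma mobius_finset {α : Type*} [DecidableEq α] (g : Finset α → ℝ) (B : Finset α) :
    ∑ C ∈ B.powerset, (-1 : ℝ) ^ (B.card - C.card) * ∑ D ∈ C.powerset, g D = g B := by
  have key : ∀ D ∈ B.powerset,
      ∑ C ∈ B.powerset.filter (fun C => D ⊆ C), (-1 : ℝ) ^ (B.card - C.card)
        = if D = B then 1 else 0 := by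
    intro D hD
    have hDB : D ⊆ B := Finset.mem_powerset.1 hD
    have : ∑ C ∈ B.powerset.filter (fun C => D ⊆ C), (-1 : ℝ) ^ (B.card - C.card)
        = ∑ E ∈ (B \ D).powerset, (-1 : ℝ) ^ ((B \ D).card - E.card) := by
      refine Finset.sum_nbij' (fun C => C \ D) (fun E => D ∪ E) ?_ ?_ ?_ ?_ ?_
      · intro C hC
        rw [Finset.mem_filter, Finset.mem_powerset] at hC
        exact Finset.mem_powerset.2 (Finset.sdiff_subset_sdiff hC.1 Finset.Subset.rfl)
      · intro E hE
        rw [Finset.mem_powerset] at hE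
        rw [Finset.mem_filter, Finset.mem_powerset]
        exact ⟨Finset.union_subset hDB (hE.trans Finset.sdiff_subset), Finset.subset_union_left⟩
      · intro C hC
        rw [Finset.mem_filter] at hC
        exact Finset.union_sdiff_of_subset hC.2
      · intro E hE
        rw [Finset.mem_powerset] at hE
        have hde : Disjoint D E := Finset.disjoint_sdiff.mono_right hE
        rw [Finset.union_sdiff_cancel_left hde]
      · intro C hC
        rw [Finset.mem_filter, Finset.mem_powerset] at hC
        congr 1
        have h1 : D.card ≤ C.card := Finset.card_le_card hC.2
        have h2 : C.card ≤ B.card := Finset.card_le_card hC.1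
        rw [Finset.card_sdiff_of_subset hDB, Finset.card_sdiff_of_subset hC.2]
        omega
    rw [this, alt_sum_powerset]
    simp only [Finset.sdiff_eq_empty_iff_subset]
    by_cases h : D = B
    · simp [h]
    · rw [if_neg h, if_neg (fun hBD => h (Finset.Subset.antisymm hDB hBD))]
  calc ∑ C ∈ B.powerset, (-1 : ℝ) ^ (B.card - C.card) * ∑ D ∈ C.powerset, g D
      = ∑ C ∈ B.powerset, ∑ D ∈ C.powerset, (-1 : ℝ) ^ (B.card - C.card) * g D := by
        simp [Finset.mul_sum]
    _ = ∑ D ∈ B.powerset, ∑ C ∈ B.powerset.filter (fun C => D ⊆ C),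
          (-1 : ℝ) ^ (B.card - C.card) * g D := by
        refine Finset.sum_comm' fun C D => ?_
        simp only [Finset.mem_powerset, Finset.mem_filter]
        constructor
        · rintro ⟨h1, h2⟩; exact ⟨⟨h1, h2⟩, h2.trans h1⟩
        · rintro ⟨⟨h1, h2⟩, h3⟩; exact ⟨h1, h2⟩
    _ = ∑ D ∈ B.powerset, (if D = B then 1 else 0) * g D := by
        refine Finset.sum_congr rfl fun D hD => ?_
        rw [← Finset.sum_mul, key D hD]
    _ = g B := by
        simp [ite_mul, Finset.sum_ite_eq', Finset.mem_powerset.2 (Finset.Subset.refl B)]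


/-- Assign to each subset `A` of an `m`-element set the weight
`β_{|A|} / C(m,|A|)` and to each `s`-tuple of subsets the product of the
weights. For every `j ∈ {0,…,m}`, the total weight of all `s`-tuples
`(A 1, …, A s)` of subsets whose union has exactly `j` elements equals
`C(m,j) · Σ_{k=0}^{j} (−1)^{j−k} C(j,k) (Σ_{d=0}^{k} β_d C(k,d)/C(m,d))^s`.
(When `β` is a probability distribution this is the probability that the
union of `s` such independent random subsets has cardinality `j`.) -/
theorem total_weight_union_card {α : Type*} [Fintype α] [DecidableEq α]
    (m : ℕ) (hm : Fintype.card α = m)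
    (s : ℕ) (hs : 1 ≤ s) (β : ℕ → ℝ)
    (j : ℕ) (hj : j ≤ m) :
    ∑ A ∈ Finset.univ.filter
        (fun A : Fin s → Finset α => (Finset.univ.biUnion A).card = j),
      ∏ i : Fin s, β (A i).card / (m.choose (A i).card : ℝ)
    = (m.choose j : ℝ) *
        ∑ k ∈ Finset.range (j + 1),
          (-1 : ℝ) ^ (j - k) * (j.choose k : ℝ) *
            (∑ d ∈ Finset.range (k + 1),
              β d * (k.choose d : ℝ) / (m.choose d : ℝ)) ^ s := by
  classical
  set w : Finset α → ℝ := fun C => β C.card / (m.choose C.card : ℝ) with hw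
  set f : ℕ → ℝ := fun k => ∑ d ∈ Finset.range (k + 1),
      β d * (k.choose d : ℝ) / (m.choose d : ℝ) with hf
  set g : Finset α → ℝ := fun B =>
      ∑ A ∈ Finset.univ.filter (fun A : Fin s → Finset α => Finset.univ.biUnion A = B),
        ∏ i : Fin s, w (A i) with hg
  -- Step C: sum of weights over a powerset
  have hsum_w : ∀ B : Finset α, ∑ C ∈ B.powerset, w C = f B.card := by
    intro B
    rw [Finset.sum_powerset_apply_card (fun n => β n / (m.choose n : ℝ))]
    refine Finset.sum_congr rfl fun d _ => ?_
    rw [nsmul_eq_mul]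
    ring
  -- Step A+B: sum of g over a powerset
  have hF : ∀ B : Finset α, ∑ C ∈ B.powerset, g C = (f B.card) ^ s := by
    intro B
    have key : ∀ C ∈ B.powerset,
        (Fintype.piFinset (fun _ : Fin s => B.powerset)).filter
            (fun p => Finset.univ.biUnion p = C)
          = Finset.univ.filter (fun p : Fin s → Finset α => Finset.univ.biUnion p = C) := by
      intro C hC
      have hCB : C ⊆ B := Finset.mem_powerset.1 hC
      ext p
      simp only [Finset.mem_filter, Fintype.mem_piFinset, Finset.mem_powerset, Finset.mem_univ,
        true_and]
      constructor
      · rintro ⟨_, h⟩; exact h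
      · intro h
        refine ⟨fun i => ?_, h⟩
        exact (Finset.subset_biUnion_of_mem p (Finset.mem_univ i)).trans (h ▸ hCB)
    have hmaps : ∀ p ∈ Fintype.piFinset (fun _ : Fin s => B.powerset),
        Finset.univ.biUnion p ∈ B.powerset := by
      intro p hp
      rw [Fintype.mem_piFinset] at hp
      exact Finset.mem_powerset.2 (Finset.biUnion_subset.2 fun i _ =>
        Finset.mem_powerset.1 (hp i))
    calc ∑ C ∈ B.powerset, g C
        = ∑ C ∈ B.powerset, ∑ p ∈ (Fintype.piFinset (fun _ : Fin s => B.powerset)).filter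
            (fun p => Finset.univ.biUnion p = C), ∏ i : Fin s, w (p i) := by
          refine Finset.sum_congr rfl fun C hC => ?_
          rw [key C hC]
      _ = ∑ p ∈ Fintype.piFinset (fun _ : Fin s => B.powerset), ∏ i : Fin s, w (p i) :=
          Finset.sum_fiberwise_of_maps_to hmaps _
      _ = (∑ C ∈ B.powerset, w C) ^ s := (Finset.sum_pow' _ _ _).symm
      _ = (f B.card) ^ s := by rw [hsum_w B]
  -- Möbius inversion
  have hgB : ∀ B : Finset α, g B = ∑ C ∈ B.powerset,
      (-1 : ℝ) ^ (B.card - C.card) * (f C.card) ^ s := by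
    intro B
    rw [← mobius_finset g B]
    exact Finset.sum_congr rfl fun C _ => by rw [hF C]
  -- fiber decomposition of the LHS over the value of the union
  have hmaps2 : ∀ A ∈ Finset.univ.filter
      (fun A : Fin s → Finset α => (Finset.univ.biUnion A).card = j),
      Finset.univ.biUnion A ∈ (Finset.univ : Finset α).powersetCard j := by
    intro A hA
    rw [Finset.mem_filter] at hA
    exact Finset.mem_powersetCard.2 ⟨Finset.subset_univ _, hA.2⟩
  calc ∑ A ∈ Finset.univ.filter
        (fun A : Fin s → Finset α => (Finset.univ.biUnion A).card = j),
      ∏ i : Fin s, β (A i).card / (m.choose (A i).card : ℝ)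
      = ∑ B ∈ (Finset.univ : Finset α).powersetCard j,
          ∑ A ∈ (Finset.univ.filter
            (fun A : Fin s → Finset α => (Finset.univ.biUnion A).card = j)).filter
            (fun A => Finset.univ.biUnion A = B), ∏ i : Fin s, w (A i) :=
        (Finset.sum_fiberwise_of_maps_to hmaps2 _).symm
    _ = ∑ B ∈ (Finset.univ : Finset α).powersetCard j, g B := by
        refine Finset.sum_congr rfl fun B hB => ?_
        have hBj : B.card = j := (Finset.mem_powersetCard.1 hB).2
        rw [hg]
        congr 1
        rw [Finset.filter_filter]
        ext A
        simp only [Finset.mem_filter, Finset.mem_univ, true_and]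
        constructor
        · rintro ⟨_, h⟩; exact h
        · intro h; exact ⟨by rw [h, hBj], h⟩
    _ = ∑ B ∈ (Finset.univ : Finset α).powersetCard j,
          ∑ k ∈ Finset.range (j + 1), (j.choose k) • ((-1 : ℝ) ^ (j - k) * (f k) ^ s) := by
        refine Finset.sum_congr rfl fun B hB => ?_
        have hBj : B.card = j := (Finset.mem_powersetCard.1 hB).2
        rw [hgB B, hBj]
        rw [show (fun C : Finset α => (-1 : ℝ) ^ (j - C.card) * (f C.card) ^ s)
          = fun C => (fun n => (-1 : ℝ) ^ (j - n) * (f n) ^ s) C.card from rfl]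
        rw [Finset.sum_powerset_apply_card (fun n => (-1 : ℝ) ^ (j - n) * (f n) ^ s), hBj]
    _ = (m.choose j : ℝ) * ∑ k ∈ Finset.range (j + 1),
          (-1 : ℝ) ^ (j - k) * (j.choose k : ℝ) * (f k) ^ s := by
        rw [Finset.sum_const, Finset.card_powersetCard, Finset.card_univ, hm, nsmul_eq_mul]
        congr 1
        refine Finset.sum_congr rfl fun k _ => ?_
        rw [nsmul_eq_mul]
        ring
end

section
/- The matrix T is diagonalizable: T = U D U^{−1}, where D is the diagonal (m+1)×(m+1) matrix with D[i,i] = T[i,i] = Σ_{d=0}^{min{D,i}} β_d C(i,d)/C(m,d); U is the upper-triangular matrix with U[i,j] = C(m−i, j−i) for i ≤ j and 0 otherwise; and U^{−1} is the upper-triangular matrix with U^{−1}[i,j] = (−1)^{j−i} C(m−i, j−i) for i ≤ j and 0 otherwise. That is, U · U' = I and U · D · U' = T, where U'[i,j] = (−1)^{j−i} C(m−i, j−i) for i ≤ j and 0 otherwise. -/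
/-- The hypergeometric p.m.f.: `hyge k n i j = C(i,k)·C(n−i,j−k)/C(n,j)` when
`max{0, i+j−n} ≤ k ≤ min{i,j}` (with `i+j−n` the truncated natural
subtraction, which equals `max{0, i+j−n}`), and `0` otherwise. -/
noncomputable def hyge (k n i j : ℕ) : ℝ :=
  if i + j - n ≤ k ∧ k ≤ min i j then
    (i.choose k : ℝ) * ((n - i).choose (j - k) : ℝ) / (n.choose j : ℝ)
  else 0

open Finset

private lemma alt1 (s b : ℕ) :
    ∑ t ∈ range (s+1), (-1:ℝ)^(s-t) * (s.choose t : ℝ) * (t.choose b : ℝ)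
      = if b = s then 1 else 0 := by
  by_cases hbs : b ≤ s
  · have hsub : ∑ t ∈ range (s+1), (-1:ℝ)^(s-t) * (s.choose t : ℝ) * (t.choose b : ℝ)
        = ∑ t ∈ Ico b (s+1), (-1:ℝ)^(s-t) * (s.choose t : ℝ) * (t.choose b : ℝ) := by
      refine (Finset.sum_subset ?_ ?_).symm
      · intro t ht; rw [mem_Ico] at ht; rw [mem_range]; omega
      · intro t ht hnt
        rw [mem_range] at ht; rw [mem_Ico] at hnt
        rw [Nat.choose_eq_zero_of_lt (by omega : t < b)]
        simp
    rw [hsub, Finset.sum_Ico_eq_sum_range]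
    rw [show s + 1 - b = (s - b) + 1 by omega]
    have hterm : ∀ u ∈ range ((s-b)+1),
        (-1:ℝ)^(s-(b+u)) * (s.choose (b+u) : ℝ) * ((b+u).choose b : ℝ)
          = (s.choose b : ℝ) * ((-1:ℝ)^(s-b) * ((-1:ℝ)^u * ((s-b).choose u : ℝ))) := by
      intro u hu
      rw [mem_range] at hu
      have h1 : s.choose (b+u) * (b+u).choose b = s.choose b * (s-b).choose u := by
        have := Nat.choose_mul (n := s) (k := b+u) (s := b) (by omega)
        simpa using this
      have h1' : (s.choose (b+u) : ℝ) * ((b+u).choose b : ℝ)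
          = (s.choose b : ℝ) * ((s-b).choose u : ℝ) := by exact_mod_cast h1
      have e2 : (-1:ℝ)^u * (-1:ℝ)^u = 1 := by
        rw [← pow_add, ← two_mul, pow_mul]; norm_num
      have e1 : (-1:ℝ)^(s-(b+u)) * (-1:ℝ)^u = (-1:ℝ)^(s-b) := by
        rw [← pow_add]; congr 1; omega
      have h2 : (-1:ℝ)^(s-(b+u)) = (-1:ℝ)^(s-b) * (-1:ℝ)^u := by
        calc (-1:ℝ)^(s-(b+u)) = (-1:ℝ)^(s-(b+u)) * ((-1:ℝ)^u * (-1:ℝ)^u) := by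
              rw [e2, mul_one]
          _ = ((-1:ℝ)^(s-(b+u)) * (-1:ℝ)^u) * (-1:ℝ)^u := by ring
          _ = (-1:ℝ)^(s-b) * (-1:ℝ)^u := by rw [e1]
      rw [h2]
      linear_combination ((-1:ℝ)^(s-b) * (-1:ℝ)^u) * h1'
    rw [Finset.sum_congr rfl hterm, ← Finset.mul_sum, ← Finset.mul_sum]
    have halt : ∑ u ∈ range ((s-b)+1), (-1:ℝ)^u * ((s-b).choose u : ℝ)
        = if s - b = 0 then 1 else 0 := by
      have h := congrArg (Int.cast : ℤ → ℝ) (Int.alternating_sum_range_choose (n := s-b))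
      push_cast at h
      convert h using 2

    rw [halt]
    by_cases hbeq : b = s
    · subst hbeq
      rw [if_pos rfl, if_pos (by omega), Nat.sub_self, pow_zero, Nat.choose_self]
      norm_num
    · rw [if_neg (by omega), if_neg hbeq]; ring
  · rw [if_neg (by omega)]
    apply Finset.sum_eq_zero
    intro t ht
    rw [mem_range] at ht
    rw [Nat.choose_eq_zero_of_lt (by omega : t < b)]
    simp

private lemma altA (s i d : ℕ) :
    ∑ t ∈ range (s+1), (-1:ℝ)^(s-t) * (s.choose t : ℝ) * ((i+t).choose d : ℝ)
      = if s ≤ d then (i.choose (d-s) : ℝ) else 0 := by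
  have expand : ∀ t : ℕ, (((i+t).choose d : ℕ) : ℝ)
      = ∑ a ∈ range (d+1), (i.choose a : ℝ) * (t.choose (d-a) : ℝ) := by
    intro t
    rw [Nat.add_choose_eq i t d, Finset.Nat.sum_antidiagonal_eq_sum_range_succ_mk]
    push_cast
    rfl
  calc ∑ t ∈ range (s+1), (-1:ℝ)^(s-t) * (s.choose t : ℝ) * ((i+t).choose d : ℝ)
      = ∑ t ∈ range (s+1), ∑ a ∈ range (d+1),
          (i.choose a : ℝ) * ((-1:ℝ)^(s-t) * (s.choose t : ℝ) * (t.choose (d-a) : ℝ)) := by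
        refine Finset.sum_congr rfl fun t _ => ?_
        rw [expand t, Finset.mul_sum]
        exact Finset.sum_congr rfl fun a _ => by ring
    _ = ∑ a ∈ range (d+1), (i.choose a : ℝ) *
          ∑ t ∈ range (s+1), (-1:ℝ)^(s-t) * (s.choose t : ℝ) * (t.choose (d-a) : ℝ) := by
        rw [Finset.sum_comm]
        exact Finset.sum_congr rfl fun a _ => (Finset.mul_sum _ _ _).symm
    _ = ∑ a ∈ range (d+1), (i.choose a : ℝ) * (if d - a = s then 1 else 0) := by
        exact Finset.sum_congr rfl fun a _ => by rw [alt1]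
    _ = if s ≤ d then (i.choose (d-s) : ℝ) else 0 := by
        by_cases hsd : s ≤ d
        · rw [if_pos hsd, Finset.sum_eq_single (d - s)]
          · rw [if_pos (by omega), mul_one]
          · intro a ha hne
            rw [mem_range] at ha
            rw [if_neg (by omega), mul_zero]
          · intro h
            exact absurd (mem_range.mpr (by omega)) h
        · rw [if_neg hsd]
          apply Finset.sum_eq_zero
          intro a ha
          rw [mem_range] at ha
          rw [if_neg (by omega), mul_zero]

private lemma keyS (m i j d : ℕ) (hij : i ≤ j) (hjm : j ≤ m) :
    ∑ k ∈ Finset.Icc i j,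
      ((m-i).choose (k-i) : ℝ) * (-1:ℝ)^(j-k) * ((m-k).choose (j-k) : ℝ) * (k.choose d : ℝ)
    = ((m-i).choose (j-i) : ℝ) *
        (if j - i ≤ d then (i.choose (d - (j-i)) : ℝ) else 0) := by
  rw [← Finset.Ico_add_one_right_eq_Icc, Finset.sum_Ico_eq_sum_range]
  rw [show j + 1 - i = (j - i) + 1 by omega]
  have hterm : ∀ t ∈ range ((j-i)+1),
      ((m-i).choose ((i+t)-i) : ℝ) * (-1:ℝ)^(j-(i+t)) * ((m-(i+t)).choose (j-(i+t)) : ℝ)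
          * ((i+t).choose d : ℝ)
      = ((m-i).choose (j-i) : ℝ) *
          ((-1:ℝ)^((j-i)-t) * ((j-i).choose t : ℝ) * ((i+t).choose d : ℝ)) := by
    intro t ht
    rw [mem_range] at ht
    rw [show (i+t) - i = t by omega, show j - (i+t) = (j-i) - t by omega,
        show m - (i+t) = (m-i) - t by omega]
    have h1 : (m-i).choose (j-i) * (j-i).choose t
        = (m-i).choose t * ((m-i)-t).choose ((j-i)-t) :=
      Nat.choose_mul (n := m-i) (k := j-i) (s := t) (by omega)
    have h1' : ((m-i).choose (j-i) : ℝ) * ((j-i).choose t : ℝ)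
        = ((m-i).choose t : ℝ) * (((m-i)-t).choose ((j-i)-t) : ℝ) := by exact_mod_cast h1
    linear_combination ((-1:ℝ)^((j-i)-t) * ((i+t).choose d : ℝ)) * h1'.symm
  rw [Finset.sum_congr rfl hterm, ← Finset.mul_sum, altA]

private lemma part1 (β : ℕ → ℝ) (m DD i : ℕ) (him : i ≤ m) :
    ∑ d ∈ Finset.range (min DD i + 1), β d * (i.choose d : ℝ) / (m.choose d : ℝ)
    = ∑ d ∈ Finset.Icc (i-i) (min DD i), β d * hyge (i+d-i) m i d := by
  rw [Nat.sub_self, ← Finset.Ico_add_one_right_eq_Icc, ← Finset.range_eq_Ico]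
  refine Finset.sum_congr rfl fun d hd => ?_
  rw [mem_range] at hd
  rw [show i + d - i = d by omega]
  simp only [hyge]
  rw [if_pos (show i + d - m ≤ d ∧ d ≤ min i d by omega), Nat.sub_self, Nat.choose_zero_right]
  push_cast
  ring

private lemma part2 (m i j : ℕ) (him : i ≤ m) (hjm : j ≤ m) :
    ∑ k ∈ Finset.range (m+1),
      (if i ≤ k then ((m-i).choose (k-i) : ℝ) else 0) *
      (if k ≤ j then (-1:ℝ)^(j-k) * ((m-k).choose (j-k) : ℝ) else 0)
    = if i = j then 1 else 0 := by
  by_cases hij : i ≤ j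
  · have h1 : ∑ k ∈ Finset.range (m+1),
        (if i ≤ k then ((m-i).choose (k-i) : ℝ) else 0) *
        (if k ≤ j then (-1:ℝ)^(j-k) * ((m-k).choose (j-k) : ℝ) else 0)
        = ∑ k ∈ Finset.Icc i j,
        (if i ≤ k then ((m-i).choose (k-i) : ℝ) else 0) *
        (if k ≤ j then (-1:ℝ)^(j-k) * ((m-k).choose (j-k) : ℝ) else 0) := by
      refine (Finset.sum_subset ?_ ?_).symm
      · intro k hk; rw [mem_Icc] at hk; rw [mem_range]; omega
      · intro k hk hk'
        rw [mem_range] at hk; rw [mem_Icc] at hk'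
        by_cases h : i ≤ k
        · rw [if_neg (by omega : ¬ k ≤ j), mul_zero]
        · rw [if_neg h, zero_mul]
    rw [h1]
    have h2 : ∑ k ∈ Finset.Icc i j,
        (if i ≤ k then ((m-i).choose (k-i) : ℝ) else 0) *
        (if k ≤ j then (-1:ℝ)^(j-k) * ((m-k).choose (j-k) : ℝ) else 0)
        = ∑ k ∈ Finset.Icc i j,
          ((m-i).choose (k-i) : ℝ) * (-1:ℝ)^(j-k) * ((m-k).choose (j-k) : ℝ)
            * (k.choose 0 : ℝ) := by
      refine Finset.sum_congr rfl fun k hk => ?_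
      rw [mem_Icc] at hk
      rw [if_pos hk.1, if_pos hk.2, Nat.choose_zero_right]
      push_cast
      ring
    rw [h2, keyS m i j 0 hij hjm]
    by_cases heq : i = j
    · subst heq
      rw [if_pos rfl, if_pos (by omega), Nat.sub_self, Nat.sub_self, Nat.choose_zero_right,
        Nat.choose_zero_right]
      norm_num
    · rw [if_neg heq, if_neg (by omega), mul_zero]
  · rw [if_neg (by omega)]
    apply Finset.sum_eq_zero
    intro k hk
    by_cases h : i ≤ k
    · rw [if_neg (by omega : ¬ k ≤ j), mul_zero]
    · rw [if_neg h, zero_mul]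

private lemma part3 (β : ℕ → ℝ) (m DD i j : ℕ) (him : i ≤ m) (hjm : j ≤ m) :
    ∑ k ∈ Finset.range (m+1),
      ((if i ≤ k then ((m-i).choose (k-i) : ℝ) else 0) *
        (∑ d ∈ Finset.range (DD+1), β d * (k.choose d : ℝ) / (m.choose d : ℝ))) *
      (if k ≤ j then (-1:ℝ)^(j-k) * ((m-k).choose (j-k) : ℝ) else 0)
    = ∑ d ∈ Finset.Icc (j-i) (min DD j), β d * hyge (i+d-j) m i d := by
  by_cases hij : i ≤ j
  · calc ∑ k ∈ Finset.range (m+1),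
        ((if i ≤ k then ((m-i).choose (k-i) : ℝ) else 0) *
          (∑ d ∈ Finset.range (DD+1), β d * (k.choose d : ℝ) / (m.choose d : ℝ))) *
        (if k ≤ j then (-1:ℝ)^(j-k) * ((m-k).choose (j-k) : ℝ) else 0)
        = ∑ k ∈ Finset.Icc i j,
        ((if i ≤ k then ((m-i).choose (k-i) : ℝ) else 0) *
          (∑ d ∈ Finset.range (DD+1), β d * (k.choose d : ℝ) / (m.choose d : ℝ))) *
        (if k ≤ j then (-1:ℝ)^(j-k) * ((m-k).choose (j-k) : ℝ) else 0) := by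
          refine (Finset.sum_subset ?_ ?_).symm
          · intro k hk; rw [mem_Icc] at hk; rw [mem_range]; omega
          · intro k hk hk'
            rw [mem_range] at hk; rw [mem_Icc] at hk'
            by_cases h : i ≤ k
            · rw [if_neg (by omega : ¬ k ≤ j), mul_zero]
            · rw [if_neg h, zero_mul, zero_mul]
      _ = ∑ k ∈ Finset.Icc i j, ∑ d ∈ Finset.range (DD+1),
            β d / (m.choose d : ℝ) *
              (((m-i).choose (k-i) : ℝ) * (-1:ℝ)^(j-k) * ((m-k).choose (j-k) : ℝ)
                * (k.choose d : ℝ)) := by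
          refine Finset.sum_congr rfl fun k hk => ?_
          rw [mem_Icc] at hk
          rw [if_pos hk.1, if_pos hk.2, Finset.mul_sum, Finset.sum_mul]
          exact Finset.sum_congr rfl fun d _ => by ring
      _ = ∑ d ∈ Finset.range (DD+1),
            β d / (m.choose d : ℝ) *
              (((m-i).choose (j-i) : ℝ) *
                (if j - i ≤ d then (i.choose (d - (j-i)) : ℝ) else 0)) := by
          rw [Finset.sum_comm]
          exact Finset.sum_congr rfl fun d _ => by
            rw [← Finset.mul_sum, keyS m i j d hij hjm]
      _ = ∑ d ∈ Finset.Icc (j-i) (min DD j),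
            β d / (m.choose d : ℝ) *
              (((m-i).choose (j-i) : ℝ) *
                (if j - i ≤ d then (i.choose (d - (j-i)) : ℝ) else 0)) := by
          refine (Finset.sum_subset ?_ ?_).symm
          · intro d hd; rw [mem_Icc] at hd; rw [mem_range]; omega
          · intro d hd hd'
            rw [mem_range] at hd; rw [mem_Icc] at hd'
            by_cases hds : j - i ≤ d
            · have hjd : j < d := by omega
              rw [if_pos hds, Nat.choose_eq_zero_of_lt (by omega : i < d - (j-i))]
              push_cast
              ring
            · rw [if_neg hds, mul_zero, mul_zero]
      _ = ∑ d ∈ Finset.Icc (j-i) (min DD j), β d * hyge (i+d-j) m i d := by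
          refine Finset.sum_congr rfl fun d hd => ?_
          rw [mem_Icc] at hd
          simp only [hyge]
          rw [if_pos (show j - i ≤ d by omega)]
          rw [if_pos (show i + d - m ≤ i + d - j ∧ i + d - j ≤ min i d by omega)]
          rw [show i + d - j = d - (j-i) by omega, show d - (d - (j-i)) = j - i by omega]
          ring
  · trans (0:ℝ)
    · apply Finset.sum_eq_zero
      intro k hk
      by_cases h : i ≤ k
      · rw [if_neg (by omega : ¬ k ≤ j), mul_zero]
      · rw [if_neg h, zero_mul, zero_mul]
    · symm
      apply Finset.sum_eq_zero
      intro d hd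
      rw [mem_Icc] at hd
      simp only [hyge]
      rw [if_neg (by omega), mul_zero]

/-- The matrix `T` with `T[i,j] = Σ_{d=j−i}^{min{D,j}} β_d hyge(i+d−j;m,i,d)`
is diagonalizable: `T = U · Λ · U⁻¹` where `Λ` is diagonal with
`Λ[i,i] = T[i,i] = Σ_{d=0}^{min{D,i}} β_d C(i,d)/C(m,d)`, `U` is upper
triangular with `U[i,j] = C(m−i, j−i)` for `i ≤ j`, and `U⁻¹ = U'` is upper
triangular with `U'[i,j] = (−1)^{j−i} C(m−i, j−i)` for `i ≤ j`; that is,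
`U · U' = 1` and `U · Λ · U' = T`. -/
theorem transition_matrix_diagonalizable (m D : ℕ) (hD : D ≤ m)
    (β : ℕ → ℝ) (hβ : ∀ d ≤ D, 0 ≤ β d)
    (hsum : ∑ d ∈ Finset.range (D + 1), β d = 1)
    (T U U' Λ : Matrix (Fin (m + 1)) (Fin (m + 1)) ℝ)
    (hT : ∀ i j : Fin (m + 1), T i j =
      ∑ d ∈ Finset.Icc (j.1 - i.1) (min D j.1),
        β d * hyge (i.1 + d - j.1) m i.1 d)
    (hU : ∀ i j : Fin (m + 1), U i j =
      if i ≤ j then ((m - i.1).choose (j.1 - i.1) : ℝ) else 0)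
    (hU' : ∀ i j : Fin (m + 1), U' i j =
      if i ≤ j then (-1 : ℝ) ^ (j.1 - i.1) * ((m - i.1).choose (j.1 - i.1) : ℝ)
      else 0)
    (hΛ : ∀ i j : Fin (m + 1), Λ i j =
      if i = j then
        ∑ d ∈ Finset.range (min D i.1 + 1),
          β d * (i.1.choose d : ℝ) / (m.choose d : ℝ)
      else 0) :
    (∀ i : Fin (m + 1), Λ i i = T i i) ∧ U * U' = 1 ∧ U * Λ * U' = T := by
  have him : ∀ i : Fin (m+1), i.1 ≤ m := fun i => by omega
  refine ⟨?_, ?_, ?_⟩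
  · intro i
    rw [hΛ i i, hT i i, if_pos rfl]
    exact part1 β m D i.1 (him i)
  · ext i j
    rw [Matrix.mul_apply, Matrix.one_apply]
    have h : ∑ k : Fin (m+1), U i k * U' k j
        = ∑ k ∈ Finset.range (m+1),
          (if i.1 ≤ k then ((m-i.1).choose (k-i.1) : ℝ) else 0) *
          (if k ≤ j.1 then (-1:ℝ)^(j.1-k) * ((m-k).choose (j.1-k) : ℝ) else 0) := by
      rw [← Fin.sum_univ_eq_sum_range]
      refine Finset.sum_congr rfl fun k _ => ?_
      simp only [hU, hU', Fin.le_def]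
    rw [h, part2 m i.1 j.1 (him i) (him j)]
    by_cases heq : i = j
    · rw [if_pos heq, if_pos (congrArg Fin.val heq)]
    · rw [if_neg heq, if_neg (fun hh => heq (Fin.ext hh))]
  · ext i j
    rw [hT i j, Matrix.mul_apply]
    have hUΛ : ∀ k : Fin (m+1), (U * Λ) i k
        = U i k * (∑ d ∈ Finset.range (D+1), β d * (k.1.choose d : ℝ) / (m.choose d : ℝ)) := by
      intro k
      rw [Matrix.mul_apply]
      rw [Finset.sum_eq_single k (fun l _ hl => by rw [hΛ l k, if_neg hl, mul_zero])
          (fun h => absurd (Finset.mem_univ k) h)]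
      rw [hΛ k k, if_pos rfl]
      congr 1
      refine Finset.sum_subset (fun d hd => ?_) (fun d hd hd' => ?_)
      · rw [Finset.mem_range] at *; omega
      · rw [Finset.mem_range] at hd hd'
        rw [Nat.choose_eq_zero_of_lt (by omega), Nat.cast_zero, mul_zero, zero_div]
    have h : ∑ k : Fin (m+1), (U * Λ) i k * U' k j
        = ∑ k ∈ Finset.range (m+1),
          ((if i.1 ≤ k then ((m-i.1).choose (k-i.1) : ℝ) else 0) *
            (∑ d ∈ Finset.range (D+1), β d * (k.choose d : ℝ) / (m.choose d : ℝ))) *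
          (if k ≤ j.1 then (-1:ℝ)^(j.1-k) * ((m-k).choose (j.1-k) : ℝ) else 0) := by
      rw [← Fin.sum_univ_eq_sum_range]
      refine Finset.sum_congr rfl fun k _ => ?_
      rw [hUΛ k]
      simp only [hU, hU', Fin.le_def]
    rw [h, part3 β m D i.1 j.1 (him i) (him j)]
end

section
/- For every integer s ≥ 1 and all indices i, j ∈ {0,…,m}, the (i,j) entry of the s-th power of T satisfies (T^s)[i,j] = C(m−i, j−i) · Σ_{k=i}^{j} (−1)^{j−k} C(j−i, k−i) (Σ_{d=0}^{min{D,k}} β_d C(k,d)/C(m,d))^s (in particular (T^s)[i,j] = 0 when j < i). -/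
open Finset Matrix

noncomputable def lamb (m D : ℕ) (β : ℕ → ℝ) (k : ℕ) : ℝ :=
  ∑ d ∈ Finset.range (min D k + 1), β d * (k.choose d : ℝ) / (m.choose d : ℝ)

noncomputable def pf (m i k : ℕ) : ℝ :=
  if i ≤ k then ((m - i).choose (k - i) : ℝ) else 0

noncomputable def qf (m k j : ℕ) : ℝ :=
  if k ≤ j then (-1 : ℝ) ^ (j - k) * ((m - k).choose (j - k) : ℝ) else 0

noncomputable def Tf (m D : ℕ) (β : ℕ → ℝ) (i j : ℕ) : ℝ :=
  ∑ d ∈ Finset.Icc (j - i) (min D j), β d * hyge (i + d - j) m i d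

lemma trinom {m i k j : ℕ} (hik : i ≤ k) (hkj : k ≤ j) (hjm : j ≤ m) :
    (m - i).choose (k - i) * (m - k).choose (j - k) =
    (m - i).choose (j - i) * (j - i).choose (k - i) := by
  have h := Nat.choose_mul (n := m - i) (k := j - i) (s := k - i)
    (by omega)
  rw [show m - i - (k - i) = m - k by omega, show j - i - (k - i) = j - k by omega] at h
  exact h.symm

lemma alt_sum (n : ℕ) :
    ∑ t ∈ Finset.range (n + 1), (-1 : ℝ) ^ (n - t) * (n.choose t : ℝ) =
      if n = 0 then 1 else 0 := by
  have h := add_pow (1 : ℝ) (-1) n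
  simp only [one_pow, one_mul] at h
  rw [show (1 : ℝ) + -1 = 0 by ring] at h
  rw [← h, zero_pow_eq]

lemma sum_Icc_shift {M : Type*} [AddCommMonoid M] (f : ℕ → M) (i k : ℕ) :
    ∑ j ∈ Finset.Icc i k, f j = ∑ t ∈ Finset.range (k + 1 - i), f (i + t) := by
  refine Finset.sum_nbij' (fun j => j - i) (fun t => i + t) ?_ ?_ ?_ ?_ ?_ <;>
    intros <;> simp_all [Finset.mem_Icc, Finset.mem_range] <;> omega

lemma vand {m i k d : ℕ} (hik : i ≤ k) (hkm : k ≤ m) (hdk : d ≤ k) :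
    ∑ j ∈ Finset.Icc i k,
      (if j ≤ i + d ∧ d ≤ j then
        (m - i).choose (j - i) * (i.choose (i + d - j) * (m - j).choose (k - j)) else 0)
      = (m - i).choose (k - i) * k.choose d := by
  have step1 : ∑ j ∈ Finset.Icc i k,
      (if j ≤ i + d ∧ d ≤ j then
        (m - i).choose (j - i) * (i.choose (i + d - j) * (m - j).choose (k - j)) else 0)
      = (m - i).choose (k - i) * ∑ j ∈ Finset.Icc i k,
        (if j ≤ i + d ∧ d ≤ j then (k - i).choose (j - i) * i.choose (i + d - j) else 0) := by
    rw [Finset.mul_sum]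
    refine Finset.sum_congr rfl fun j hj => ?_
    rw [Finset.mem_Icc] at hj
    split
    · have h := trinom (m := m) hj.1 hj.2 hkm
      calc (m - i).choose (j - i) * (i.choose (i + d - j) * (m - j).choose (k - j))
          = (m - i).choose (j - i) * (m - j).choose (k - j) * i.choose (i + d - j) := by ring
        _ = (m - i).choose (k - i) * (k - i).choose (j - i) * i.choose (i + d - j) := by rw [h]
        _ = (m - i).choose (k - i) * ((k - i).choose (j - i) * i.choose (i + d - j)) := by ring
    · simp
  rw [step1]
  congr 1
  rw [sum_Icc_shift]
  have step2 : ∑ t ∈ Finset.range (k + 1 - i),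
      (if i + t ≤ i + d ∧ d ≤ i + t then
        (k - i).choose (i + t - i) * i.choose (i + d - (i + t)) else 0)
      = ∑ t ∈ Finset.range (k + 1 - i),
        (if t ≤ d then i.choose (d - t) * (k - i).choose t else 0) := by
    refine Finset.sum_congr rfl fun t ht => ?_
    by_cases h1 : t ≤ d
    · by_cases h2 : d ≤ i + t
      · rw [if_pos (by omega), if_pos h1,
          show i + t - i = t by omega, show i + d - (i + t) = d - t by omega, Nat.mul_comm]
      · rw [if_neg (by omega), if_pos h1,
          Nat.choose_eq_zero_of_lt (by omega), Nat.zero_mul]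
    · rw [if_neg (by omega), if_neg h1]
  rw [step2]
  have common : ∀ N : ℕ, d ≤ N → k - i ≤ N →
      ∑ t ∈ Finset.range (N + 1),
        (if t ≤ d then i.choose (d - t) * (k - i).choose t else 0)
      = ∑ t ∈ Finset.range (d + 1), i.choose (d - t) * (k - i).choose t := by
    intro N hdN hkiN
    rw [← Finset.sum_subset (Finset.range_subset_range.mpr (by omega) :
        Finset.range (d + 1) ⊆ Finset.range (N + 1))
      (fun t ht hnt => by
        rw [Finset.mem_range] at ht hnt
        rw [if_neg (by omega)])]
    refine Finset.sum_congr rfl fun t ht => ?_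
    rw [Finset.mem_range] at ht
    rw [if_pos (by omega)]
  rw [show k + 1 - i = (k - i) + 1 by omega]
  have ext1 : ∑ t ∈ Finset.range ((k - i) + 1),
      (if t ≤ d then i.choose (d - t) * (k - i).choose t else 0)
      = ∑ t ∈ Finset.range (d + (k - i) + 1),
        (if t ≤ d then i.choose (d - t) * (k - i).choose t else 0) := by
    refine Finset.sum_subset (Finset.range_subset_range.mpr (by omega)) fun t ht hnt => ?_
    rw [Finset.mem_range] at ht hnt
    split
    · rw [show (k - i).choose t = 0 from Nat.choose_eq_zero_of_lt (by omega), Nat.mul_zero]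
    · rfl
  rw [ext1, common (d + (k - i)) (by omega) (by omega)]
  have hv := Nat.add_choose_eq i (k - i) d
  rw [show i + (k - i) = k by omega,
    Finset.Nat.sum_antidiagonal_eq_sum_range_succ_mk] at hv
  have hr := Finset.sum_range_reflect
    (fun t => i.choose t * (k - i).choose (d - t)) (d + 1)
  rw [hv, ← hr]
  refine Finset.sum_congr rfl fun t ht => ?_
  rw [Finset.mem_range] at ht
  rw [show d + 1 - 1 - t = d - t by omega, show d - (d - t) = t by omega]

lemma Tf_eq_zero {m D : ℕ} (β : ℕ → ℝ) {i j : ℕ} (hji : j < i) : Tf m D β i j = 0 := by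
  refine Finset.sum_eq_zero fun d hd => ?_
  rw [Finset.mem_Icc] at hd
  rw [hyge, if_neg (by omega), mul_zero]

lemma Tf_eq {m D : ℕ} (β : ℕ → ℝ) {i j : ℕ} (hij : i ≤ j) (hjm : j ≤ m) :
    Tf m D β i j = ∑ d ∈ Finset.Icc (j - i) (min D j),
      β d * ((i.choose (i + d - j) : ℝ) * (((m - i).choose (j - i) : ℝ)) / (m.choose d : ℝ)) := by
  refine Finset.sum_congr rfl fun d hd => ?_
  rw [Finset.mem_Icc] at hd
  rw [hyge, if_pos (by omega), show d - (i + d - j) = j - i by omega]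

lemma eigen (m D : ℕ) (β : ℕ → ℝ) {i k : ℕ} (him : i ≤ m) (hkm : k ≤ m) :
    ∑ j ∈ Finset.range (m + 1), Tf m D β i j * pf m j k = pf m i k * lamb m D β k := by
  by_cases hik : i ≤ k
  · -- restrict to Icc i k
    rw [← Finset.sum_subset
        (show Finset.Icc i k ⊆ Finset.range (m + 1) by
          intro x hx; rw [Finset.mem_Icc] at hx; rw [Finset.mem_range]; omega)
        (fun j hj hnj => by
          rw [Finset.mem_range] at hj
          rw [Finset.mem_Icc] at hnj
          by_cases h : j < i
          · rw [Tf_eq_zero β h, zero_mul]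
          · rw [pf, if_neg (by omega), mul_zero])]
    -- rewrite each term
    have hterm : ∀ j ∈ Finset.Icc i k,
        Tf m D β i j * pf m j k
        = ∑ d ∈ Finset.range (D + 1),
          (if j - i ≤ d ∧ d ≤ min D j then
            β d * ((i.choose (i + d - j) : ℝ) * (((m - i).choose (j - i) : ℝ)) / (m.choose d : ℝ))
              * ((m - j).choose (k - j) : ℝ)
          else 0) := by
      intro j hj
      rw [Finset.mem_Icc] at hj
      rw [Tf_eq β hj.1 (by omega), pf, if_pos hj.2]
      rw [Finset.sum_mul]
      have : ∀ d, (if j - i ≤ d ∧ d ≤ min D j then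
            β d * ((i.choose (i + d - j) : ℝ) * (((m - i).choose (j - i) : ℝ)) / (m.choose d : ℝ))
              * ((m - j).choose (k - j) : ℝ) else 0)
          = (if d ∈ Finset.Icc (j - i) (min D j) then
            β d * ((i.choose (i + d - j) : ℝ) * (((m - i).choose (j - i) : ℝ)) / (m.choose d : ℝ))
              * ((m - j).choose (k - j) : ℝ) else 0) := by
        intro d; simp only [Finset.mem_Icc]
      rw [Finset.sum_congr rfl fun d _ => this d, Finset.sum_ite_mem,
        Finset.inter_eq_right.mpr
          (show Finset.Icc (j - i) (min D j) ⊆ Finset.range (D + 1) by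
            intro x hx; rw [Finset.mem_Icc] at hx; rw [Finset.mem_range]; omega)]
    rw [Finset.sum_congr rfl hterm, Finset.sum_comm]
    -- rewrite RHS
    rw [pf, if_pos hik, lamb]
    have hrhs : ∑ d ∈ Finset.range (min D k + 1), β d * (k.choose d : ℝ) / (m.choose d : ℝ)
        = ∑ d ∈ Finset.range (D + 1),
          (if d ≤ k then β d * (k.choose d : ℝ) / (m.choose d : ℝ) else 0) := by
      rw [← Finset.sum_subset (Finset.range_subset_range.mpr (by omega) :
          Finset.range (min D k + 1) ⊆ Finset.range (D + 1))
        (fun d hd hnd => by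
          rw [Finset.mem_range] at hd hnd
          rw [if_neg (by omega)])]
      refine Finset.sum_congr rfl fun d hd => ?_
      rw [Finset.mem_range] at hd
      rw [if_pos (by omega)]
    rw [hrhs, Finset.mul_sum]
    refine Finset.sum_congr rfl fun d hd => ?_
    rw [Finset.mem_range] at hd
    by_cases hdk : d ≤ k
    · rw [if_pos hdk]
      have hstep : ∀ j ∈ Finset.Icc i k,
          (if j - i ≤ d ∧ d ≤ min D j then
            β d * ((i.choose (i + d - j) : ℝ) * (((m - i).choose (j - i) : ℝ)) / (m.choose d : ℝ))
              * ((m - j).choose (k - j) : ℝ) else 0)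
          = β d / (m.choose d : ℝ) *
            ((if j ≤ i + d ∧ d ≤ j then
              (m - i).choose (j - i) * (i.choose (i + d - j) * (m - j).choose (k - j))
            else 0 : ℕ) : ℝ) := by
        intro j hj
        rw [Finset.mem_Icc] at hj
        have hcond : (j - i ≤ d ∧ d ≤ min D j) ↔ (j ≤ i + d ∧ d ≤ j) := by omega
        rw [if_congr hcond rfl rfl]
        split
        · push_cast; ring
        · simp
      rw [Finset.sum_congr rfl hstep, ← Finset.mul_sum, ← Nat.cast_sum,
        vand hik hkm hdk]
      push_cast
      ring
    · rw [if_neg hdk, mul_zero]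
      refine Finset.sum_eq_zero fun j hj => ?_
      rw [Finset.mem_Icc] at hj
      rw [if_neg (by omega)]
  · rw [pf, if_neg hik, zero_mul]
    refine Finset.sum_eq_zero fun j hj => ?_
    by_cases h : j < i
    · rw [Tf_eq_zero β h, zero_mul]
    · rw [pf, if_neg (by omega), mul_zero]

lemma PQ_apply {m i j : ℕ} (him : i ≤ m) (hjm : j ≤ m) :
    ∑ k ∈ Finset.range (m + 1), pf m i k * qf m k j = if i = j then 1 else 0 := by
  by_cases hij : i ≤ j
  · rw [← Finset.sum_subset
        (show Finset.Icc i j ⊆ Finset.range (m + 1) by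
          intro x hx; rw [Finset.mem_Icc] at hx; rw [Finset.mem_range]; omega)
        (fun k hk hnk => by
          rw [Finset.mem_range] at hk
          rw [Finset.mem_Icc] at hnk
          by_cases h : k < i
          · rw [pf, if_neg (by omega), zero_mul]
          · rw [qf, if_neg (by omega), mul_zero])]
    have hterm : ∀ k ∈ Finset.Icc i j, pf m i k * qf m k j
        = ((m - i).choose (j - i) : ℝ) *
          ((-1 : ℝ) ^ (j - k) * ((j - i).choose (k - i) : ℝ)) := by
      intro k hk
      rw [Finset.mem_Icc] at hk
      rw [pf, if_pos hk.1, qf, if_pos hk.2]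
      have h := trinom (m := m) hk.1 hk.2 hjm
      have hc : (((m - i).choose (k - i) : ℝ)) * ((m - k).choose (j - k) : ℝ)
          = ((m - i).choose (j - i) : ℝ) * ((j - i).choose (k - i) : ℝ) := by
        exact_mod_cast congrArg (Nat.cast : ℕ → ℝ) h
      calc ((m - i).choose (k - i) : ℝ) * ((-1 : ℝ) ^ (j - k) * ((m - k).choose (j - k) : ℝ))
          = (-1 : ℝ) ^ (j - k) * ((((m - i).choose (k - i) : ℝ)) * ((m - k).choose (j - k) : ℝ)) := by
            ring
        _ = (-1 : ℝ) ^ (j - k) * (((m - i).choose (j - i) : ℝ) * ((j - i).choose (k - i) : ℝ)) := by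
            rw [hc]
        _ = ((m - i).choose (j - i) : ℝ) *
            ((-1 : ℝ) ^ (j - k) * ((j - i).choose (k - i) : ℝ)) := by ring
    rw [Finset.sum_congr rfl hterm, ← Finset.mul_sum, sum_Icc_shift]
    have hre : ∀ t ∈ Finset.range (j + 1 - i),
        (-1 : ℝ) ^ (j - (i + t)) * ((j - i).choose (i + t - i) : ℝ)
        = (-1 : ℝ) ^ ((j - i) - t) * ((j - i).choose t : ℝ) := by
      intro t ht
      rw [Finset.mem_range] at ht
      rw [show j - (i + t) = (j - i) - t by omega, show i + t - i = t by omega]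
    rw [Finset.sum_congr rfl hre, show j + 1 - i = (j - i) + 1 by omega, alt_sum]
    by_cases h : i = j
    · rw [if_pos h, if_pos (by omega), show j - i = 0 by omega]
      simp
    · rw [if_neg h, if_neg (by omega), mul_zero]
  · rw [if_neg (by omega)]
    refine Finset.sum_eq_zero fun k hk => ?_
    by_cases h : k < i
    · rw [pf, if_neg (by omega), zero_mul]
    · rw [qf, if_neg (by omega), mul_zero]

lemma final_sum (m D : ℕ) (β : ℕ → ℝ) (s : ℕ) {i j : ℕ} (him : i ≤ m) (hjm : j ≤ m) :
    ∑ k ∈ Finset.range (m + 1), pf m i k * (lamb m D β k ^ s * qf m k j)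
    = ((m - i).choose (j - i) : ℝ) *
      ∑ k ∈ Finset.Icc i j,
        (-1 : ℝ) ^ (j - k) * ((j - i).choose (k - i) : ℝ) * lamb m D β k ^ s := by
  rw [← Finset.sum_subset
      (show Finset.Icc i j ⊆ Finset.range (m + 1) by
        intro x hx; rw [Finset.mem_Icc] at hx; rw [Finset.mem_range]; omega)
      (fun k hk hnk => by
        rw [Finset.mem_range] at hk
        rw [Finset.mem_Icc] at hnk
        by_cases h : k < i
        · rw [pf, if_neg (by omega), zero_mul]
        · rw [qf, if_neg (by omega), mul_zero, mul_zero])]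
  rw [Finset.mul_sum]
  refine Finset.sum_congr rfl fun k hk => ?_
  rw [Finset.mem_Icc] at hk
  rw [pf, if_pos hk.1, qf, if_pos hk.2]
  have h := trinom (m := m) hk.1 hk.2 hjm
  have hc : (((m - i).choose (k - i) : ℝ)) * ((m - k).choose (j - k) : ℝ)
      = ((m - i).choose (j - i) : ℝ) * ((j - i).choose (k - i) : ℝ) := by
    exact_mod_cast congrArg (Nat.cast : ℕ → ℝ) h
  calc ((m - i).choose (k - i) : ℝ) *
        (lamb m D β k ^ s * ((-1 : ℝ) ^ (j - k) * ((m - k).choose (j - k) : ℝ)))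
      = (lamb m D β k ^ s * (-1 : ℝ) ^ (j - k)) *
        (((m - i).choose (k - i) : ℝ) * ((m - k).choose (j - k) : ℝ)) := by ring
    _ = (lamb m D β k ^ s * (-1 : ℝ) ^ (j - k)) *
        (((m - i).choose (j - i) : ℝ) * ((j - i).choose (k - i) : ℝ)) := by rw [hc]
    _ = ((m - i).choose (j - i) : ℝ) *
        ((-1 : ℝ) ^ (j - k) * ((j - i).choose (k - i) : ℝ) * lamb m D β k ^ s) := by ring


/-- For the matrix `T` with
`T[i,j] = Σ_{d=j−i}^{min{D,j}} β_d hyge(i+d−j;m,i,d)`, every `s ≥ 1` and all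
`i, j ∈ {0,…,m}`, the `(i,j)` entry of the `s`-th power satisfies
`(T^s)[i,j] = C(m−i, j−i) · Σ_{k=i}^{j} (−1)^{j−k} C(j−i, k−i)
(Σ_{d=0}^{min{D,k}} β_d C(k,d)/C(m,d))^s`
(in particular `(T^s)[i,j] = 0` when `j < i`, the sum being empty). -/
theorem transition_matrix_pow_entry (m D : ℕ) (hD : D ≤ m)
    (β : ℕ → ℝ) (hβ : ∀ d ≤ D, 0 ≤ β d)
    (hsum : ∑ d ∈ Finset.range (D + 1), β d = 1)
    (T : Matrix (Fin (m + 1)) (Fin (m + 1)) ℝ)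
    (hT : ∀ i j : Fin (m + 1), T i j =
      ∑ d ∈ Finset.Icc (j.1 - i.1) (min D j.1),
        β d * hyge (i.1 + d - j.1) m i.1 d)
    (s : ℕ) (hs : 1 ≤ s) (i j : Fin (m + 1)) :
    (T ^ s) i j = ((m - i.1).choose (j.1 - i.1) : ℝ) *
      ∑ k ∈ Finset.Icc i.1 j.1,
        (-1 : ℝ) ^ (j.1 - k) * ((j.1 - i.1).choose (k - i.1) : ℝ) *
          (∑ d ∈ Finset.range (min D k + 1),
            β d * (k.choose d : ℝ) / (m.choose d : ℝ)) ^ s := by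
  set P : Matrix (Fin (m + 1)) (Fin (m + 1)) ℝ :=
    Matrix.of fun a b : Fin (m + 1) => pf m a.1 b.1 with hP
  set Q : Matrix (Fin (m + 1)) (Fin (m + 1)) ℝ :=
    Matrix.of fun a b : Fin (m + 1) => qf m a.1 b.1 with hQ
  set L : Matrix (Fin (m + 1)) (Fin (m + 1)) ℝ :=
    Matrix.diagonal (fun a : Fin (m + 1) => lamb m D β a.1) with hL
  have hT' : ∀ a b : Fin (m + 1), T a b = Tf m D β a.1 b.1 := fun a b => (hT a b).trans rfl
  have hPQ : P * Q = 1 := by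
    ext a b
    rw [Matrix.mul_apply]
    simp only [hP, hQ, Matrix.of_apply]
    rw [Fin.sum_univ_eq_sum_range (fun k => pf m a.1 k * qf m k b.1) (m + 1)]
    rw [PQ_apply (Nat.lt_succ_iff.mp a.2) (Nat.lt_succ_iff.mp b.2)]
    rw [Matrix.one_apply]
    simp [Fin.ext_iff]
  have hTP : T * P = P * L := by
    ext a b
    rw [Matrix.mul_apply]
    have : ∀ c : Fin (m + 1), T a c * P c b = Tf m D β a.1 c.1 * pf m c.1 b.1 := by
      intro c; rw [hT']; rfl
    rw [Finset.sum_congr rfl fun c _ => this c]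
    rw [Fin.sum_univ_eq_sum_range (fun c => Tf m D β a.1 c * pf m c b.1) (m + 1)]
    rw [eigen m D β (Nat.lt_succ_iff.mp a.2) (Nat.lt_succ_iff.mp b.2)]
    rw [hL, Matrix.mul_diagonal]
    rfl
  have hQP : Q * P = 1 := mul_eq_one_comm.mp hPQ
  have hTeq : T = P * L * Q := by
    calc T = T * (P * Q) := by rw [hPQ, Matrix.mul_one]
      _ = (T * P) * Q := by rw [Matrix.mul_assoc]
      _ = P * L * Q := by rw [hTP]
  have hpow : ∀ n : ℕ, T ^ n = P * L ^ n * Q := by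
    intro n
    induction n with
    | zero => rw [pow_zero, pow_zero, Matrix.mul_one, hPQ]
    | succ n ih =>
      rw [pow_succ, ih, hTeq, pow_succ]
      rw [Matrix.mul_assoc (P * L ^ n) Q (P * L * Q), ← Matrix.mul_assoc Q (P * L) Q,
        ← Matrix.mul_assoc Q P L, hQP, Matrix.one_mul,
        ← Matrix.mul_assoc (P * L ^ n) L Q, Matrix.mul_assoc P (L ^ n) L]
  rw [hpow s]
  have hLs : L ^ s = Matrix.diagonal (fun a : Fin (m + 1) => lamb m D β a.1 ^ s) := by
    rw [hL, Matrix.diagonal_pow]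
    rfl
  rw [hLs, Matrix.mul_assoc, Matrix.mul_apply]
  have : ∀ c : Fin (m + 1),
      P i c * (Matrix.diagonal (fun a : Fin (m + 1) => lamb m D β a.1 ^ s) * Q) c j
      = pf m i.1 c.1 * (lamb m D β c.1 ^ s * qf m c.1 j.1) := by
    intro c
    rw [Matrix.diagonal_mul]
    rfl
  rw [Finset.sum_congr rfl fun c _ => this c]
  rw [Fin.sum_univ_eq_sum_range (fun c => pf m i.1 c * (lamb m D β c ^ s * qf m c j.1)) (m + 1)]
  rw [final_sum m D β s (Nat.lt_succ_iff.mp i.2) (Nat.lt_succ_iff.mp j.2)]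
  rfl
end

section
/- Let F be a finite field with q elements, let M, N, d be nonnegative integers, and let H be a fixed M×N matrix over F with rank(H) = k. Then for every nonnegative integer r ≤ min{d,k}, the number of d×M matrices G over F with rank(G·H) = r equals q^{dM} · ζ_r^{d,k}; equivalently, if G is a uniformly random d×M matrix over F, then Pr{rank(G·H) = r} = ζ_r^{d,k}, the same as the rank distribution of a uniformly random d×k matrix over F. -/
/-- `ζ_r^m = ∏_{i=0}^{r−1} (1 − q^{−m+i})` (an empty product, hence `1`, for
`r = 0`). -/
noncomputable def zetaRM (q r m : ℕ) : ℝ :=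
  ∏ i ∈ Finset.range r, (1 - (q : ℝ) ^ ((i : ℤ) - (m : ℤ)))

/-- `ζ_r^{d,k} = ζ_r^d ζ_r^k / (ζ_r^r q^{(d−r)(k−r)})`. -/
noncomputable def zetaRDK (q r d k : ℕ) : ℝ :=
  zetaRM q r d * zetaRM q r k / (zetaRM q r r * (q : ℝ) ^ ((d - r) * (k - r)))


open Module LinearMap Function

section aux

lemma fiber_count {A B : Type*} [Finite A] [Finite B] (p : A → B) (c : ℕ)
    (h : ∀ b : B, Nat.card {a : A // p a = b} = c) : Nat.card A = Nat.card B * c := by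
  classical
  cases nonempty_fintype A; cases nonempty_fintype B
  rw [Nat.card_eq_fintype_card, Nat.card_eq_fintype_card,
    ← Fintype.card_congr (Equiv.sigmaFiberEquiv p), Fintype.card_sigma]
  have : ∀ b : B, Fintype.card {a : A // p a = b} = c := by
    intro b; rw [← Nat.card_eq_fintype_card]; exact h b
  simp [this, Finset.sum_const, mul_comm]

variable {F : Type*} [Field F] [Fintype F]
variable {V W : Type*} [AddCommGroup V] [Module F V] [AddCommGroup W] [Module F W]

local notation "q" => Fintype.card F

noncomputable def injEquivLinIndep {n : ℕ} (b : Basis (Fin n) F V) :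
    {f : V →ₗ[F] W // Function.Injective f} ≃ {s : Fin n → W // LinearIndependent F s} where
  toFun f := ⟨f.1 ∘ b, b.linearIndependent.map' f.1 (ker_eq_bot.2 f.2)⟩
  invFun s := ⟨b.constr F s.1, by
    rw [← ker_eq_bot, Submodule.eq_bot_iff]
    intro x hx
    have hx' : (b.constr F s.1) x = 0 := hx
    rw [Basis.constr_apply, Finsupp.sum_fintype _ _ (by simp)] at hx'
    have h0 := (Fintype.linearIndependent_iff.1 s.2) _ hx'
    have : b.repr x = 0 := Finsupp.ext h0
    calc x = b.repr.symm (b.repr x) := (b.repr.symm_apply_apply x).symm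
    _ = 0 := by rw [this]; simp⟩
  left_inv f := by
    ext1; apply b.ext; intro i; simp [Basis.constr_basis]
  right_inv s := by
    ext1; funext i; simp [Basis.constr_basis]

lemma frk_eq_iff_inj [FiniteDimensional F V] (f : V →ₗ[F] W) :
    finrank F (range f) = finrank F V ↔ Injective f := by
  constructor
  · intro h
    rw [← ker_eq_bot]
    have h2 := finrank_range_add_finrank_ker f
    rw [h] at h2
    exact Submodule.finrank_eq_zero.1 (by omega)
  · exact fun h => f.finrank_range_of_inj h

lemma frk_eq_iff_surj [FiniteDimensional F W] (f : V →ₗ[F] W) :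
    finrank F (range f) = finrank F W ↔ Surjective f := by
  constructor
  · intro h; rw [← range_eq_top]; exact Submodule.eq_top_of_finrank_eq h
  · intro h; rw [range_eq_top.2 h, finrank_top]

/-- number of injective linear maps -/
lemma card_inj {r : ℕ} [FiniteDimensional F V] [FiniteDimensional F W]
    (hV : finrank F V = r) (hrW : r ≤ finrank F W) :
    Nat.card {f : V →ₗ[F] W // Injective f}
      = ∏ i ∈ Finset.range r, (q ^ finrank F W - q ^ i) := by
  have : Finite W := Module.finite_of_finite F
  rw [Nat.card_congr (injEquivLinIndep (finBasisOfFinrankEq F V hV)),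
    card_linearIndependent hrW]
  rw [← Fin.prod_univ_eq_prod_range]

lemma frk_arrowCongr {V' W' : Type*} [AddCommGroup V'] [Module F V']
    [AddCommGroup W'] [Module F W']
    (e₁ : V ≃ₗ[F] V') (e₂ : W ≃ₗ[F] W') (f : V →ₗ[F] W) :
    finrank F (range (e₁.arrowCongr e₂ f)) = finrank F (range f) := by
  have h : (e₁.arrowCongr e₂ f) = (e₂.toLinearMap ∘ₗ f) ∘ₗ (e₁.symm.toLinearMap) := by
    ext x; simp [LinearEquiv.arrowCongr]
  rw [h, range_comp, LinearEquiv.range, Submodule.map_top, range_comp]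
  exact LinearEquiv.finrank_map_eq e₂ _

lemma surj_arrowCongr {V' W' : Type*} [AddCommGroup V'] [Module F V']
    [AddCommGroup W'] [Module F W']
    (e₁ : V ≃ₗ[F] V') (e₂ : W ≃ₗ[F] W') (f : V →ₗ[F] W) :
    Surjective (e₁.arrowCongr e₂ f) ↔ Surjective f := by
  have h : ⇑(e₁.arrowCongr e₂ f) = ⇑e₂ ∘ ⇑f ∘ ⇑e₁.symm := by
    funext x; simp [LinearEquiv.arrowCongr]
  rw [h]
  constructor
  · intro hs
    have := hs
    intro w
    obtain ⟨x, hx⟩ := hs (e₂ w)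
    exact ⟨e₁.symm x, e₂.injective (by simpa using hx)⟩
  · intro hs
    exact e₂.surjective.comp (hs.comp e₁.symm.surjective)

/-- surjections concretely by matrix transpose duality -/
lemma card_surj_concrete {k r : ℕ} (h : r ≤ k) :
    Nat.card {f : (Fin k → F) →ₗ[F] (Fin r → F) // Surjective f}
      = ∏ i ∈ Finset.range r, (q ^ k - q ^ i) := by
  have hfr : finrank F (Fin r → F) = r := by
    simp [Module.finrank_fintype_fun_eq_card]
  have hfk : finrank F (Fin k → F) = k := by
    simp [Module.finrank_fintype_fun_eq_card]
  have key : ∀ (a b : ℕ) (g : (Fin a → F) →ₗ[F] (Fin b → F)),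
      finrank F (range g) = (LinearMap.toMatrix' g).rank := by
    intro a b g
    rw [Matrix.rank, ← Matrix.toLin'_apply', Matrix.toLin'_toMatrix']
  have e1 : {f : (Fin k → F) →ₗ[F] (Fin r → F) // Surjective f}
      ≃ {A : Matrix (Fin r) (Fin k) F // A.rank = r} := by
    refine (Equiv.subtypeEquiv LinearMap.toMatrix'.toEquiv ?_)
    intro f
    rw [← frk_eq_iff_surj, hfr, LinearEquiv.coe_toEquiv, key]
  have e2 : {A : Matrix (Fin r) (Fin k) F // A.rank = r}
      ≃ {B : Matrix (Fin k) (Fin r) F // B.rank = r} := by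
    refine ⟨fun A => ⟨A.1.transpose, by rw [Matrix.rank_transpose]; exact A.2⟩,
      fun B => ⟨B.1.transpose, by rw [Matrix.rank_transpose]; exact B.2⟩, ?_, ?_⟩ <;>
      intro x <;> ext1 <;> simp
  have e3 : {B : Matrix (Fin k) (Fin r) F // B.rank = r}
      ≃ {g : (Fin r → F) →ₗ[F] (Fin k → F) // Injective g} := by
    refine (Equiv.subtypeEquiv LinearMap.toMatrix'.toEquiv ?_).symm
    intro g
    rw [← frk_eq_iff_inj, hfr, LinearEquiv.coe_toEquiv, key]
  rw [Nat.card_congr ((e1.trans e2).trans e3), card_inj hfr (by rw [hfk]; exact h), hfk]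

lemma card_surj {r : ℕ} [FiniteDimensional F V] [FiniteDimensional F W]
    (hW : finrank F W = r) (hrV : r ≤ finrank F V) :
    Nat.card {f : V →ₗ[F] W // Surjective f}
      = ∏ i ∈ Finset.range r, (q ^ finrank F V - q ^ i) := by
  set kk := finrank F V with hkk
  have e₁ : V ≃ₗ[F] (Fin kk → F) := (finBasis F V).equivFun
  have e₂ : W ≃ₗ[F] (Fin r → F) := (finBasisOfFinrankEq F W hW).equivFun
  have e : {f : V →ₗ[F] W // Surjective f}
      ≃ {f : (Fin kk → F) →ₗ[F] (Fin r → F) // Surjective f} :=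
    Equiv.subtypeEquiv (e₁.arrowCongr e₂).toEquiv fun f => (surj_arrowCongr e₁ e₂ f).symm
  rw [Nat.card_congr e, card_surj_concrete hrV]

lemma grass_count {r : ℕ} [FiniteDimensional F W] (hr : r ≤ finrank F W) :
    ∏ i ∈ Finset.range r, (q ^ finrank F W - q ^ i)
      = Nat.card {U : Submodule F W // finrank F U = r}
          * ∏ i ∈ Finset.range r, (q ^ r - q ^ i) := by
  have : Finite W := Module.finite_of_finite F
  have hsub : Finite (Submodule F W) :=
    Finite.of_injective (fun U => (U : Set W)) fun U U' h => SetLike.ext' h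
  have hspan : ∀ s : {s : Fin r → W // LinearIndependent F s},
      finrank F (Submodule.span F (Set.range s.1)) = r := by
    intro s
    rw [finrank_span_eq_card s.2, Fintype.card_fin]
  rw [← Fin.prod_univ_eq_prod_range (f := fun i => q ^ finrank F W - q ^ i), ← card_linearIndependent hr]
  refine fiber_count (fun s => ⟨Submodule.span F (Set.range s.1), hspan s⟩) _ ?_
  intro U
  have hUfin : Finite U := Subtype.finite
  have e : {s : {s : Fin r → W // LinearIndependent F s} //
        (⟨Submodule.span F (Set.range s.1), hspan s⟩ : {U : Submodule F W // finrank F U = r}) = U}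
      ≃ {t : Fin r → U.1 // LinearIndependent F t} := by
    refine ⟨fun s => ⟨fun i => ⟨s.1.1 i, ?_⟩, ?_⟩, fun t => ⟨⟨fun i => (t.1 i : W), ?_⟩, ?_⟩, ?_, ?_⟩
    · have hU : Submodule.span F (Set.range s.1.1) = U.1 := congrArg Subtype.val s.2
      exact hU ▸ Submodule.subset_span (Set.mem_range_self i)
    · exact LinearIndependent.of_comp U.1.subtype (by exact s.1.2)
    · exact t.2.map' U.1.subtype (by rw [ker_eq_bot]; exact Subtype.val_injective)
    · refine Subtype.ext ?_
      show Submodule.span F (Set.range fun i => ((t.1 i : W))) = U.1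
      have hle : Submodule.span F (Set.range fun i => ((t.1 i : W))) ≤ U.1 := by
        rw [Submodule.span_le]; rintro x ⟨i, rfl⟩; exact (t.1 i).2
      refine Submodule.eq_of_le_of_finrank_eq hle ?_
      have hind : LinearIndependent F (fun i => ((t.1 i : W))) :=
        t.2.map' U.1.subtype (by rw [ker_eq_bot]; exact Subtype.val_injective)
      rw [finrank_span_eq_card hind, Fintype.card_fin, U.2]
    · intro s; ext i; rfl
    · intro t; ext i; rfl
  rw [Nat.card_congr e, card_linearIndependent (by rw [U.2])]
  rw [← Fin.prod_univ_eq_prod_range, U.2]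

lemma card_rank_maps {r : ℕ} [FiniteDimensional F V] [FiniteDimensional F W]
    (hrV : r ≤ finrank F V) :
    Nat.card {f : V →ₗ[F] W // finrank F (range f) = r}
      = Nat.card {U : Submodule F W // finrank F U = r}
          * ∏ i ∈ Finset.range r, (q ^ finrank F V - q ^ i) := by
  have : Finite W := Module.finite_of_finite F
  have : Finite V := Module.finite_of_finite F
  have hmapfin : Finite (V →ₗ[F] W) :=
    Finite.of_injective (fun f => (f : V → W)) DFunLike.coe_injective
  have hsub : Finite (Submodule F W) :=
    Finite.of_injective (fun U => (U : Set W)) fun U U' h => SetLike.ext' h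
  refine fiber_count
    (fun f => (⟨range f.1, f.2⟩ : {U : Submodule F W // finrank F U = r})) _ ?_
  intro U
  have e1 : {f : {f : V →ₗ[F] W // finrank F (range f) = r} //
        (⟨range f.1, f.2⟩ : {U : Submodule F W // finrank F U = r}) = U}
      ≃ {f : V →ₗ[F] W // range f = U.1} := by
    refine ⟨fun f => ⟨f.1.1, congrArg Subtype.val f.2⟩,
      fun f => ⟨⟨f.1, by rw [f.2]; exact U.2⟩, Subtype.ext f.2⟩, ?_, ?_⟩
    · intro f; ext1; rfl
    · intro f; ext1; rfl
  have e2 : {f : V →ₗ[F] W // range f = U.1} ≃ {g : V →ₗ[F] U.1 // Surjective g} := by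
    refine ⟨fun f => ⟨codRestrict U.1 f.1 (fun x => f.2.le (mem_range_self f.1 x)), ?_⟩,
      fun g => ⟨U.1.subtype ∘ₗ g.1, by
        rw [range_comp, range_eq_top.2 g.2, Submodule.map_top, Submodule.range_subtype]⟩,
      ?_, ?_⟩
    · rintro ⟨u, hu⟩
      have : u ∈ range f.1 := f.2.symm ▸ hu
      obtain ⟨x, hx⟩ := this
      exact ⟨x, Subtype.ext hx⟩
    · intro f; ext1; rfl
    · intro g; ext x; rfl
  rw [Nat.card_congr (e1.trans e2), card_surj U.2 hrV]

lemma phi_surj {d M : ℕ} (W : Submodule F (Fin M → F)) (f : W →ₗ[F] (Fin d → F)) :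
    ∃ G : Matrix (Fin d) (Fin M) F, G.mulVecLin ∘ₗ W.subtype = f := by
  obtain ⟨g, hg⟩ := f.exists_extend
  refine ⟨LinearMap.toMatrix' g, ?_⟩
  rw [← Matrix.toLin'_apply', Matrix.toLin'_toMatrix', hg]

lemma phi_fiber {d M : ℕ} (W : Submodule F (Fin M → F)) (f : W →ₗ[F] (Fin d → F)) :
    Nat.card {G : Matrix (Fin d) (Fin M) F // G.mulVecLin ∘ₗ W.subtype = f}
      = Nat.card {G : Matrix (Fin d) (Fin M) F // G.mulVecLin ∘ₗ W.subtype = 0} := by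
  obtain ⟨G₀, hG₀⟩ := phi_surj W f
  have key : ∀ A B : Matrix (Fin d) (Fin M) F, (A - B).mulVecLin ∘ₗ W.subtype
      = A.mulVecLin ∘ₗ W.subtype - B.mulVecLin ∘ₗ W.subtype := by
    intro A B
    rw [← Matrix.toLin'_apply', ← Matrix.toLin'_apply', ← Matrix.toLin'_apply',
      map_sub, sub_comp]
  have key2 : ∀ A B : Matrix (Fin d) (Fin M) F, (A + B).mulVecLin ∘ₗ W.subtype
      = A.mulVecLin ∘ₗ W.subtype + B.mulVecLin ∘ₗ W.subtype := by
    intro A B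
    rw [← Matrix.toLin'_apply', ← Matrix.toLin'_apply', ← Matrix.toLin'_apply',
      map_add, add_comp]
  refine Nat.card_congr ⟨fun G => ⟨G.1 - G₀, by rw [key, G.2, hG₀, sub_self]⟩,
    fun G => ⟨G.1 + G₀, by rw [key2, G.2, hG₀, zero_add]⟩, ?_, ?_⟩
  · intro G; ext1; simp
  · intro G; ext1; simp

lemma card_G_eq {M N d k r : ℕ} (H : Matrix (Fin M) (Fin N) F) (hH : H.rank = k) :
    Nat.card {G : Matrix (Fin d) (Fin M) F // (G * H).rank = r}
      = Nat.card {f : (range H.mulVecLin) →ₗ[F] (Fin d → F) // finrank F (range f) = r}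
        * Nat.card {G : Matrix (Fin d) (Fin M) F //
            G.mulVecLin ∘ₗ (range H.mulVecLin).subtype = 0} := by
  set W := range H.mulVecLin with hWdef
  have hrank : ∀ G : Matrix (Fin d) (Fin M) F,
      (G * H).rank = finrank F (range (G.mulVecLin ∘ₗ W.subtype)) := by
    intro G
    rw [Matrix.rank, Matrix.mulVecLin_mul, range_comp, range_comp, Submodule.range_subtype]
  have hfin : Finite (W →ₗ[F] (Fin d → F)) :=
    Finite.of_injective (fun f => (f : W → (Fin d → F))) DFunLike.coe_injective
  refine Eq.trans (fiber_count (fun G => (⟨G.1.mulVecLin ∘ₗ W.subtype, by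
      rw [← hrank]; exact G.2⟩ : {f : W →ₗ[F] (Fin d → F) // finrank F (range f) = r}))
    (Nat.card {G : Matrix (Fin d) (Fin M) F // G.mulVecLin ∘ₗ W.subtype = 0}) ?_) rfl
  intro f
  refine Eq.trans (Nat.card_congr ⟨fun G => ⟨G.1.1, congrArg Subtype.val G.2⟩,
    fun G => ⟨⟨G.1, by rw [hrank, G.2]; exact f.2⟩, Subtype.ext G.2⟩,
    fun G => by ext1; rfl, fun G => by ext1; rfl⟩) (phi_fiber W f.1)

lemma card_total {M d : ℕ} (W : Submodule F (Fin M → F)) :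
    q ^ (d * M) = Nat.card (W →ₗ[F] (Fin d → F))
        * Nat.card {G : Matrix (Fin d) (Fin M) F // G.mulVecLin ∘ₗ W.subtype = 0} := by
  have hfin : Finite (W →ₗ[F] (Fin d → F)) :=
    Finite.of_injective (fun f => (f : W → (Fin d → F))) DFunLike.coe_injective
  have htot : Nat.card (Matrix (Fin d) (Fin M) F) = q ^ (d * M) := by
    classical
    calc Nat.card (Matrix (Fin d) (Fin M) F) = Nat.card (Fin d → Fin M → F) :=
          Nat.card_congr (Matrix.of (m := Fin d) (n := Fin M) (α := F)).symm
    _ = (q ^ M) ^ d := by rw [Nat.card_eq_fintype_card]; simp [Fintype.card_fun]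
    _ = q ^ (d * M) := by rw [← pow_mul, Nat.mul_comm]
  rw [← htot]
  exact fiber_count (fun G : Matrix (Fin d) (Fin M) F => G.mulVecLin ∘ₗ W.subtype)
    (Nat.card {G : Matrix (Fin d) (Fin M) F // G.mulVecLin ∘ₗ W.subtype = 0})
    (fun f => phi_fiber W f)

lemma card_hom {M d k : ℕ} (W : Submodule F (Fin M → F)) (hW : finrank F W = k) :
    Nat.card (W →ₗ[F] (Fin d → F)) = q ^ (d * k) := by
  have hfin : Finite (W →ₗ[F] (Fin d → F)) :=
    Finite.of_injective (fun f => (f : W → (Fin d → F))) DFunLike.coe_injective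
  cases nonempty_fintype (W →ₗ[F] (Fin d → F))
  rw [Nat.card_eq_fintype_card, card_eq_pow_finrank (K := F), Module.finrank_linearMap,
    hW, Module.finrank_fintype_fun_eq_card, Fintype.card_fin, mul_comm]

lemma card_matrix_rank_eq {d k r : ℕ} :
    Nat.card {A : Matrix (Fin d) (Fin k) F // A.rank = r}
      = Nat.card {f : (Fin k → F) →ₗ[F] (Fin d → F) // finrank F (range f) = r} :=
  (Nat.card_congr (Equiv.subtypeEquiv LinearMap.toMatrix'.toEquiv (fun f => by
    rw [LinearEquiv.coe_toEquiv, Matrix.rank, ← Matrix.toLin'_apply',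
      Matrix.toLin'_toMatrix']))).symm

end aux

lemma prod_cast {q r m : ℕ} (hq : 1 < q) (hrm : r ≤ m) :
    ((∏ i ∈ Finset.range r, (q ^ m - q ^ i) : ℕ) : ℝ)
      = (q : ℝ) ^ (r * m) * zetaRM q r m := by
  have hq0 : (q : ℝ) ≠ 0 := Nat.cast_ne_zero.2 (by omega)
  have hfac : ∀ i ∈ Finset.range r, ((q ^ m - q ^ i : ℕ) : ℝ)
      = (q : ℝ) ^ m * (1 - (q : ℝ) ^ ((i : ℤ) - (m : ℤ))) := by
    intro i hi
    have hile : i ≤ m := le_trans (le_of_lt (Finset.mem_range.1 hi)) hrm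
    rw [Nat.cast_sub (Nat.pow_le_pow_right (by omega) hile)]
    have hqq : (q : ℝ) ^ m * (q : ℝ) ^ ((i : ℤ) - (m : ℤ)) = (q : ℝ) ^ i := by
      rw [← zpow_natCast (q : ℝ) m, ← zpow_natCast (q : ℝ) i, ← zpow_add₀ hq0]
      congr 1
      ring
    rw [mul_sub, mul_one, hqq]
    push_cast
    ring
  rw [Nat.cast_prod, Finset.prod_congr rfl hfac, Finset.prod_mul_distrib, Finset.prod_const,
    Finset.card_range, zetaRM, ← pow_mul, mul_comm m r]

/-- Let `H` be a fixed `M×N` matrix over a finite field `F` with `q` elements,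
with `rank H = k`. For every `r ≤ min{d,k}`, the number of `d×M` matrices `G`
over `F` with `rank(G·H) = r` equals `q^{dM} · ζ_r^{d,k}`; equivalently, for a
uniformly random `G`, `Pr{rank(G·H) = r} = ζ_r^{d,k}` — the same as the rank
distribution of a uniformly random `d×k` matrix over `F`. -/
theorem card_G_rank_GH (F : Type*) [Field F] [Fintype F]
    (q : ℕ) (hq : q = Fintype.card F)
    (M N d k : ℕ) (H : Matrix (Fin M) (Fin N) F) (hH : H.rank = k)
    (r : ℕ) (hrd : r ≤ d) (hrk : r ≤ k) :
    (Nat.card {G : Matrix (Fin d) (Fin M) F // (G * H).rank = r} : ℝ)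
        = (q : ℝ) ^ (d * M) * zetaRDK q r d k ∧
    (Nat.card {G : Matrix (Fin d) (Fin M) F // (G * H).rank = r} : ℝ)
          / (q : ℝ) ^ (d * M)
        = zetaRDK q r d k ∧
    (Nat.card {G : Matrix (Fin d) (Fin M) F // (G * H).rank = r} : ℝ)
          / (q : ℝ) ^ (d * M)
        = (Nat.card {A : Matrix (Fin d) (Fin k) F // A.rank = r} : ℝ)
            / (q : ℝ) ^ (d * k) := by
  subst hq
  classical
  obtain ⟨d', rfl⟩ : ∃ d', d = r + d' := ⟨d - r, by omega⟩
  obtain ⟨k', rfl⟩ : ∃ k', k = r + k' := ⟨k - r, by omega⟩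
  set q := Fintype.card F with hqdef
  have hq1 : 1 < q := Fintype.one_lt_card
  have hq0 : (q : ℝ) ≠ 0 := Nat.cast_ne_zero.2 (by omega)
  set d := r + d' with hddef
  set k := r + k' with hkdef
  set W := LinearMap.range H.mulVecLin with hWdef
  have hWk : Module.finrank F W = k := hH
  have hfd : Module.finrank F (Fin d → F) = d := by
    simp [Module.finrank_fintype_fun_eq_card]
  have hfk : Module.finrank F (Fin k → F) = k := by
    simp [Module.finrank_fintype_fun_eq_card]
  set Gn := Nat.card {U : Submodule F (Fin d → F) // Module.finrank F U = r} with hGn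
  set c := Nat.card {G : Matrix (Fin d) (Fin M) F //
    G.mulVecLin ∘ₗ W.subtype = 0} with hc
  have E1 : Nat.card {G : Matrix (Fin d) (Fin M) F // (G * H).rank = r}
      = (Gn * ∏ i ∈ Finset.range r, (q ^ k - q ^ i)) * c := by
    rw [card_G_eq H hH, card_rank_maps (by rw [hWk]; exact hrk), hWk]
  have E2 : (∏ i ∈ Finset.range r, (q ^ d - q ^ i))
      = Gn * ∏ i ∈ Finset.range r, (q ^ r - q ^ i) := by
    have h := grass_count (F := F) (W := Fin d → F) (r := r) (by rw [hfd]; exact hrd)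
    rw [hfd] at h; exact h
  have E3 : Nat.card {A : Matrix (Fin d) (Fin k) F // A.rank = r}
      = Gn * ∏ i ∈ Finset.range r, (q ^ k - q ^ i) := by
    rw [card_matrix_rank_eq, card_rank_maps (by rw [hfk]; exact hrk), hfk]
  have E4 : q ^ (d * M) = q ^ (d * k) * c := by
    have h := card_total (F := F) (d := d) W
    rw [card_hom W hWk] at h; exact h
  have hRn : 0 < ∏ i ∈ Finset.range r, (q ^ r - q ^ i) :=
    Finset.prod_pos (fun i hi => by
      have := Nat.pow_lt_pow_right hq1 (Finset.mem_range.1 hi); omega)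
  have hζr : zetaRM q r r ≠ 0 := by
    intro h0
    have h := prod_cast (q := q) hq1 (le_refl r)
    rw [h0, mul_zero] at h
    exact (Nat.cast_pos.2 hRn).ne' h
  have E2ℝ : (q : ℝ) ^ (r * d) * zetaRM q r d
      = (Gn : ℝ) * ((q : ℝ) ^ (r * r) * zetaRM q r r) := by
    have h := congrArg (Nat.cast (R := ℝ)) E2
    rw [Nat.cast_mul, prod_cast hq1 hrd, prod_cast hq1 (le_refl r)] at h
    exact h
  have hGnℝ : (Gn : ℝ)
      = (q : ℝ) ^ (r * d) * zetaRM q r d / ((q : ℝ) ^ (r * r) * zetaRM q r r) := by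
    rw [E2ℝ]; field_simp
  have hsub1 : d - r = d' := by omega
  have hsub2 : k - r = k' := by omega
  have hzdk : zetaRDK q r d k
      = zetaRM q r d * zetaRM q r k / (zetaRM q r r * (q : ℝ) ^ (d' * k')) := by
    rw [zetaRDK, hsub1, hsub2]
  have C : (Nat.card {A : Matrix (Fin d) (Fin k) F // A.rank = r} : ℝ)
      = (q : ℝ) ^ (d * k) * zetaRDK q r d k := by
    have h := congrArg (Nat.cast (R := ℝ)) E3
    rw [Nat.cast_mul, prod_cast hq1 hrk] at h
    rw [h, hGnℝ, hzdk, hddef, hkdef]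
    field_simp
    ring
  have E4ℝ : (q : ℝ) ^ (d * M) = (q : ℝ) ^ (d * k) * (c : ℝ) := by
    have h := congrArg (Nat.cast (R := ℝ)) E4
    push_cast at h
    exact h
  have E5 : Nat.card {G : Matrix (Fin d) (Fin M) F // (G * H).rank = r}
      = Nat.card {A : Matrix (Fin d) (Fin k) F // A.rank = r} * c := by
    rw [E1, ← E3]
  have goal1 : (Nat.card {G : Matrix (Fin d) (Fin M) F // (G * H).rank = r} : ℝ)
      = (q : ℝ) ^ (d * M) * zetaRDK q r d k := by
    rw [E5]
    push_cast
    rw [C, E4ℝ]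
    ring
  have hpow : ((q : ℝ)) ^ (d * M) ≠ 0 := pow_ne_zero _ hq0
  have hpow2 : ((q : ℝ)) ^ (d * k) ≠ 0 := pow_ne_zero _ hq0
  have goal2 : (Nat.card {G : Matrix (Fin d) (Fin M) F // (G * H).rank = r} : ℝ)
      / (q : ℝ) ^ (d * M) = zetaRDK q r d k := by
    rw [goal1, mul_div_cancel_left₀ _ hpow]
  refine ⟨goal1, goal2, ?_⟩
  rw [goal2, C, mul_div_cancel_left₀ _ hpow2]
end

section
/- Let F be a finite field with q elements, let d ≥ 1 and M, N ≥ 0 be integers, let v ∈ F^d be a nonzero row vector, and let H be an M×N matrix over F with rank(H) = k. Then the number of d×M matrices G over F such that v·G·H is the zero row vector equals q^{dM−k}; equivalently, for a uniformly random d×M matrix G over F, Pr{v·G·H = 0} = q^{−k}. -/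
/-- Let `F` be a finite field with `q` elements, `v ∈ F^d` a nonzero row
vector, and `H` an `M×N` matrix over `F` with `rank H = k`. Then the number of
`d×M` matrices `G` over `F` such that `v·G·H` is the zero row vector equals
`q^{dM−k}`; equivalently, for a uniformly random `d×M` matrix `G`,
`Pr{v·G·H = 0} = q^{−k}`. -/
theorem card_G_vGH_eq_zero (F : Type*) [Field F] [Fintype F]
    (q : ℕ) (hq : q = Fintype.card F)
    (d M N : ℕ) (hd : 1 ≤ d)
    (v : Fin d → F) (hv : v ≠ 0)
    (k : ℕ) (H : Matrix (Fin M) (Fin N) F) (hH : H.rank = k) :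
    Nat.card {G : Matrix (Fin d) (Fin M) F // Matrix.vecMul v (G * H) = 0}
        = q ^ (d * M - k) ∧
    (Nat.card {G : Matrix (Fin d) (Fin M) F // Matrix.vecMul v (G * H) = 0} : ℝ)
          / (q : ℝ) ^ (d * M)
        = (q : ℝ) ^ (-(k : ℤ)) := by
  classical
  -- the linear map G ↦ v ᵥ* G
  set ψ : Matrix (Fin d) (Fin M) F →ₗ[F] (Fin M → F) :=
    { toFun := fun G => Matrix.vecMul v G
      map_add' := by intro A B; simp [Matrix.vecMul_add]
      map_smul' := by
        intro c A
        funext j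
        simp [Matrix.vecMul, dotProduct, Finset.mul_sum, mul_left_comm] } with hψ
  have hψsurj : Function.Surjective ψ := by
    intro w
    obtain ⟨i, hi⟩ : ∃ i, v i ≠ 0 := by
      by_contra h
      push_neg at h
      exact hv (funext fun i => h i)
    refine ⟨Matrix.of fun r c => if r = i then w c / v i else 0, ?_⟩
    funext c
    simp only [hψ, LinearMap.coe_mk, AddHom.coe_mk, Matrix.vecMul, dotProduct]
    rw [Finset.sum_eq_single i]
    · simp only [Matrix.of_apply, if_pos rfl, ↓reduceIte]
      field_simp
    · intro b _ hb; simp [Matrix.of_apply, hb]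
    · simp
  set φ : Matrix (Fin d) (Fin M) F →ₗ[F] (Fin N → F) :=
    (Matrix.vecMulLinear H).comp ψ with hφ
  have hφ_apply : ∀ G, φ G = Matrix.vecMul v (G * H) := by
    intro G
    simp [hφ, hψ, Matrix.vecMulLinear_apply, Matrix.vecMul_vecMul]
  have hrange : LinearMap.range φ = LinearMap.range (Matrix.vecMulLinear H) := by
    rw [hφ, LinearMap.range_comp, LinearMap.range_eq_top.2 hψsurj, Submodule.map_top]
  have hrank_range : Module.finrank F (LinearMap.range φ) = k := by
    rw [hrange]
    have heq : Matrix.vecMulLinear H = Matrix.mulVecLin (Matrix.transpose H) := by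
      ext x
      simp [Matrix.vecMulLinear_apply, Matrix.mulVecLin_apply, Matrix.mulVec_transpose]
    rw [heq]
    have h1 : Module.finrank F (LinearMap.range (Matrix.mulVecLin (Matrix.transpose H)))
        = (Matrix.transpose H).rank := rfl
    rw [h1, Matrix.rank_transpose, hH]
  have hker : Module.finrank F (LinearMap.ker φ) = d * M - k := by
    have hrn := LinearMap.finrank_range_add_finrank_ker φ
    have hdim : Module.finrank F (Matrix (Fin d) (Fin M) F) = d * M := by
      simp [Module.finrank_matrix]
    rw [hrank_range, hdim] at hrn
    omega
  have hcard_ker : Nat.card (LinearMap.ker φ) = q ^ (d * M - k) := by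
    rw [Nat.card_eq_fintype_card, hq, ← hker]
    exact Module.card_eq_pow_finrank
  have hset : Nat.card {G : Matrix (Fin d) (Fin M) F // Matrix.vecMul v (G * H) = 0}
      = q ^ (d * M - k) := by
    rw [← hcard_ker]
    apply Nat.card_congr
    apply Equiv.subtypeEquivRight
    intro G
    rw [LinearMap.mem_ker, hφ_apply]
  have hkle : k ≤ d * M := by
    have h1 : H.rank ≤ Fintype.card (Fin M) := H.rank_le_card_height
    rw [hH, Fintype.card_fin] at h1
    have : k ≤ M := h1
    calc k ≤ M := this
      _ = 1 * M := (one_mul M).symm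
      _ ≤ d * M := Nat.mul_le_mul_right M hd
  refine ⟨hset, ?_⟩
  have hq1 : (1:ℕ) ≤ q := by
    rw [hq]; exact Fintype.card_pos
  have hqR : (q : ℝ) ≠ 0 := by positivity
  rw [hset]
  rw [div_eq_iff (by positivity), Nat.cast_pow,
    ← zpow_natCast (q:ℝ) (d*M - k), ← zpow_natCast (q:ℝ) (d*M), ← zpow_add₀ hqR]
  congr 1
  omega
end

section
/- Fix integers v ≥ 1, l ≥ 1, t ≥ 0, and r ≥ 2, and consider t·r check sockets grouped into t check nodes with r sockets each. The number of injective maps f from a set of v·l labeled variable-node sockets into the set of t·r check sockets such that every one of the t check nodes contains at least two sockets in the image of f equals (v·l)! · coef{((1+x)^r − 1 − r·x)^t, x^{v·l}}. -/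
open Polynomial

namespace CardConstellationsAux

open Finset

noncomputable def Q (r : ℕ) : Polynomial ℤ := (1 + X) ^ r - 1 - C (r : ℤ) * X

lemma coeff_Q (r k : ℕ) : (Q r).coeff k = if 2 ≤ k then (r.choose k : ℤ) else 0 := by
  simp only [Q, coeff_sub, coeff_one_add_X_pow, coeff_one, coeff_C_mul, coeff_X]
  match k with
  | 0 => simp
  | 1 => simp
  | (k+2) => simp


lemma coeff_Q_pow (r t n : ℕ) : ((Q r) ^ t).coeff n =
    ∑ d ∈ finsuppAntidiag (univ : Finset (Fin t)) n,
      ∏ c : Fin t, (if 2 ≤ d c then (r.choose (d c) : ℤ) else 0) := by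
  have h0 : ((Q r) ^ t).coeff n = PowerSeries.coeff n ((Q r : PowerSeries ℤ) ^ t) := by
    rw [← Polynomial.coe_pow, Polynomial.coeff_coe]
  have h1 : ((Q r : PowerSeries ℤ)) ^ t = ∏ _c : Fin t, (Q r : PowerSeries ℤ) := by
    simp
  rw [h0, h1, PowerSeries.coeff_prod]
  refine Finset.sum_congr rfl fun d _ => Finset.prod_congr rfl fun c _ => ?_
  rw [Polynomial.coeff_coe, coeff_Q]


def T (t r n : ℕ) : Finset (Fin t → Finset (Fin r)) :=
  univ.filter fun g => (∀ c, 2 ≤ (g c).card) ∧ ∑ c, (g c).card = n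

lemma card_T (t r n : ℕ) : ((T t r n).card : ℤ) =
    ∑ d ∈ finsuppAntidiag (univ : Finset (Fin t)) n,
      ∏ c : Fin t, (if 2 ≤ d c then (r.choose (d c) : ℤ) else 0) := by
  classical
  have hmap : ∀ g ∈ T t r n,
      (Finsupp.equivFunOnFinite.symm fun c => (g c).card) ∈
        finsuppAntidiag (univ : Finset (Fin t)) n := by
    intro g hg
    rw [Finset.mem_finsuppAntidiag]
    simp only [T, mem_filter] at hg
    refine ⟨?_, subset_univ _⟩
    simpa using hg.2.2
  rw [Finset.card_eq_sum_card_fiberwise hmap]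
  push_cast
  refine Finset.sum_congr rfl fun d hd => ?_
  rw [Finset.mem_finsuppAntidiag] at hd
  by_cases h2 : ∀ c, 2 ≤ d c
  · have : ((T t r n).filter fun g =>
        (Finsupp.equivFunOnFinite.symm fun c => (g c).card) = d)
        = Fintype.piFinset fun c => Finset.powersetCard (d c) (univ : Finset (Fin r)) := by
      ext g
      simp only [T, mem_filter, mem_univ, true_and, Fintype.mem_piFinset,
        Finset.mem_powersetCard_univ, Equiv.symm_apply_eq]
      constructor
      · rintro ⟨-, hfd⟩ c
        exact congrFun hfd c
      · intro hc
        have hfun : (fun c => (g c).card) = ⇑d := funext fun c => hc c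
        refine ⟨⟨fun c => (hc c) ▸ h2 c, ?_⟩, ?_⟩
        · rw [show (∑ c, (g c).card) = ∑ c, d c by exact Finset.sum_congr rfl fun c _ => hc c]
          simpa using hd.1
        · exact hfun
    rw [this, Fintype.card_piFinset]
    push_cast [Finset.card_powersetCard, Finset.card_univ, Fintype.card_fin]
    exact Finset.prod_congr rfl fun c _ => by rw [if_pos (h2 c)]
  · push_neg at h2
    obtain ⟨c0, hc0⟩ := h2
    have hempty : ((T t r n).filter fun g =>
        (Finsupp.equivFunOnFinite.symm fun c => (g c).card) = d) = ∅ := by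
      rw [Finset.filter_eq_empty_iff]
      intro g hg hfd
      simp only [T, mem_filter] at hg
      have := congrFun (congrArg (fun (x : Fin t →₀ ℕ) => (x : Fin t → ℕ)) hfd) c0
      simp only [Finsupp.coe_equivFunOnFinite_symm] at this
      have h2c := hg.2.1 c0
      omega
    rw [hempty]
    simp only [Finset.card_empty, Nat.cast_zero]
    have hz : (if 2 ≤ d c0 then ((r.choose (d c0)) : ℤ) else 0) = 0 := if_neg (by omega)
    exact (Finset.prod_eq_zero (Finset.mem_univ c0) hz).symm


def S (t r n : ℕ) : Finset (Finset (Fin t × Fin r)) :=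
  univ.filter fun A => A.card = n ∧ ∀ c, 2 ≤ (A.filter fun y => y.1 = c).card

lemma fiber_card_image (t r : ℕ) (A : Finset (Fin t × Fin r)) (c : Fin t) :
    ((A.filter fun y => y.1 = c).image Prod.snd).card
      = (A.filter fun y => y.1 = c).card := by
  apply Finset.card_image_of_injOn
  intro y hy z hz hyz
  simp only [Finset.coe_filter, Set.mem_setOf_eq] at hy hz
  exact Prod.ext (hy.2.trans hz.2.symm) hyz

lemma card_fiberwise_fst (t r : ℕ) (A : Finset (Fin t × Fin r)) :
    A.card = ∑ c : Fin t, (A.filter fun y => y.1 = c).card :=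
  Finset.card_eq_sum_card_fiberwise (fun x _ => Finset.mem_univ x.1)

lemma j_filter (t r : ℕ) (g : Fin t → Finset (Fin r)) (c : Fin t) :
    ((univ.filter fun y : Fin t × Fin r => y.2 ∈ g y.1).filter fun y => y.1 = c)
      = (g c).image fun p => (c, p) := by
  ext ⟨a, b⟩
  simp only [mem_filter, mem_univ, true_and, mem_image, Prod.mk.injEq]
  constructor
  · rintro ⟨hb, rfl⟩; exact ⟨b, hb, rfl, rfl⟩
  · rintro ⟨p, hp, rfl, rfl⟩; exact ⟨hp, rfl⟩

lemma card_S_eq_card_T (t r n : ℕ) : (S t r n).card = (T t r n).card := by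
  classical
  apply Finset.card_nbij'
    (i := fun A => fun c => (A.filter fun y => y.1 = c).image Prod.snd)
    (j := fun g => univ.filter fun y => y.2 ∈ g y.1)
  · intro A hA
    simp only [S, Finset.coe_filter, Set.mem_setOf_eq, mem_filter, mem_univ, true_and] at hA
    simp only [T, Finset.coe_filter, Set.mem_setOf_eq, mem_filter, mem_univ, true_and]
    constructor
    · intro c; rw [fiber_card_image]; exact hA.2 c
    · calc ∑ c : Fin t, ((A.filter fun y => y.1 = c).image Prod.snd).card
          = ∑ c : Fin t, (A.filter fun y => y.1 = c).card :=
            Finset.sum_congr rfl fun c _ => fiber_card_image t r A c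
        _ = A.card := (card_fiberwise_fst t r A).symm
        _ = n := hA.1
  · intro g hg
    simp only [T, Finset.coe_filter, Set.mem_setOf_eq, mem_filter, mem_univ, true_and] at hg
    simp only [S, Finset.coe_filter, Set.mem_setOf_eq, mem_filter, mem_univ, true_and]
    have hcf : ∀ c, ((univ.filter fun y : Fin t × Fin r => y.2 ∈ g y.1).filter
        fun y => y.1 = c).card = (g c).card := by
      intro c
      rw [j_filter, Finset.card_image_of_injective _ (Prod.mk_right_injective c)]
    constructor
    · rw [card_fiberwise_fst]
      rw [Finset.sum_congr rfl fun c _ => hcf c]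
      exact hg.2
    · intro c; rw [hcf c]; exact hg.1 c
  · intro A hA
    ext ⟨a, b⟩
    simp only [mem_filter, mem_univ, true_and, mem_image, mem_filter]
    constructor
    · rintro ⟨⟨x, y⟩, ⟨hx, rfl⟩, rfl⟩; exact hx
    · intro h; exact ⟨(a, b), ⟨h, rfl⟩, rfl⟩
  · intro g hg
    funext c
    ext p
    simp only [mem_image, mem_filter, mem_univ, true_and]
    constructor
    · rintro ⟨⟨a, b⟩, ⟨hb, rfl⟩, rfl⟩; exact hb
    · intro hp; exact ⟨(c, p), ⟨hp, rfl⟩, rfl⟩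


lemma filter_card_eq (t r n : ℕ) (f : Fin n → Fin t × Fin r)
    (hf : Function.Injective f) (c : Fin t) :
    ((univ.image f).filter fun y => y.1 = c).card
      = (univ.filter fun s => (f s).1 = c).card := by
  rw [Finset.filter_image, Finset.card_image_of_injective _ hf]

lemma count_f (t r n : ℕ) :
    (univ.filter fun f : Fin n → Fin t × Fin r =>
        Function.Injective f ∧
          ∀ c : Fin t, 2 ≤ (univ.filter fun s => (f s).1 = c).card).card
      = (S t r n).card * n.factorial := by
  classical
  have hmap : ∀ f ∈ (univ.filter fun f : Fin n → Fin t × Fin r =>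
      Function.Injective f ∧
        ∀ c : Fin t, 2 ≤ (univ.filter fun s => (f s).1 = c).card),
      univ.image f ∈ S t r n := by
    intro f hf
    simp only [mem_filter, mem_univ, true_and] at hf
    simp only [S, mem_filter, mem_univ, true_and]
    refine ⟨?_, fun c => ?_⟩
    · rw [Finset.card_image_of_injective _ hf.1, Finset.card_univ, Fintype.card_fin]
    · rw [filter_card_eq t r n f hf.1 c]; exact hf.2 c
  rw [Finset.card_eq_sum_card_fiberwise hmap]
  rw [Finset.sum_congr rfl (fun A hA => ?_), Finset.sum_const, smul_eq_mul]
  -- fiber card = n!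
  simp only [S, mem_filter, mem_univ, true_and] at hA
  have key : ((univ.filter fun f : Fin n → Fin t × Fin r =>
      Function.Injective f ∧
        ∀ c : Fin t, 2 ≤ (univ.filter fun s => (f s).1 = c).card).filter
          fun f => univ.image f = A).card
      = Fintype.card (Fin n ↪ ↥A) := by
    rw [← Finset.card_univ]
    have hmem : ∀ f ∈ ((univ.filter fun f : Fin n → Fin t × Fin r =>
        Function.Injective f ∧
          ∀ c : Fin t, 2 ≤ (univ.filter fun s => (f s).1 = c).card).filter
            fun f => univ.image f = A),
        Function.Injective f ∧ ∀ k, f k ∈ A := by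
      intro f hf
      rw [Finset.mem_filter] at hf
      refine ⟨(Finset.mem_filter.1 hf.1).2.1, fun k => ?_⟩
      rw [← hf.2]
      exact Finset.mem_image_of_mem f (mem_univ k)
    refine Finset.card_bij'
      (fun f hf => ⟨fun k => ⟨f k, (hmem f hf).2 k⟩,
        fun a b hab => (hmem f hf).1 (congrArg Subtype.val hab)⟩)
      (fun e _ => fun k => (e k : Fin t × Fin r))
      (fun f hf => mem_univ _) ?_ (fun f hf => rfl) (fun e he => Function.Embedding.ext fun k => Subtype.ext rfl)
    intro e he
    have hinj : Function.Injective (fun k => (e k : Fin t × Fin r)) :=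
      fun a b hab => e.injective (Subtype.ext hab)
    have himg : univ.image (fun k => (e k : Fin t × Fin r)) = A := by
      apply Finset.eq_of_subset_of_card_le
      · intro y hy
        obtain ⟨k, -, rfl⟩ := Finset.mem_image.1 hy
        exact (e k).2
      · rw [Finset.card_image_of_injective _ hinj, Finset.card_univ, Fintype.card_fin, hA.1]
    refine Finset.mem_filter.2 ⟨Finset.mem_filter.2 ⟨mem_univ _, hinj, fun c => ?_⟩, himg⟩
    rw [← filter_card_eq t r n _ hinj c, himg]
    exact hA.2 c
  rw [key, Fintype.card_embedding_eq, Fintype.card_coe, Fintype.card_fin, hA.1,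
    Nat.descFactorial_self]

end CardConstellationsAux

/-- Consider `t·r` check sockets grouped into `t` check nodes with `r`
sockets each (a check socket is a pair `(c, p) : Fin t × Fin r`). The number
of injective maps `f` from a set of `v·l` labeled variable-node sockets into
the set of check sockets such that every one of the `t` check nodes contains
at least two sockets in the image of `f` equals
`(v·l)! · coef{((1+x)^r − 1 − r·x)^t, x^{v·l}}`. -/
theorem card_constellations (v l t r : ℕ) (hv : 1 ≤ v) (hl : 1 ≤ l)
    (hr : 2 ≤ r) :
    (Nat.card {f : Fin (v * l) → Fin t × Fin r //
        Function.Injective f ∧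
        ∀ c : Fin t, 2 ≤ (Finset.univ.filter (fun s => (f s).1 = c)).card} : ℤ)
      = (Nat.factorial (v * l) : ℤ) *
          ((((1 + X : Polynomial ℤ) ^ r - 1 - C (r : ℤ) * X) ^ t).coeff (v * l)) := by
  have h1 : Nat.card {f : Fin (v * l) → Fin t × Fin r //
      Function.Injective f ∧
      ∀ c : Fin t, 2 ≤ (Finset.univ.filter (fun s => (f s).1 = c)).card}
      = (Finset.univ.filter fun f : Fin (v * l) → Fin t × Fin r =>
          Function.Injective f ∧
          ∀ c : Fin t, 2 ≤ (Finset.univ.filter fun s => (f s).1 = c).card).card := by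
    rw [Nat.card_eq_fintype_card, Fintype.card_subtype]
  have h2 : ((CardConstellationsAux.T t r (v * l)).card : ℤ)
      = ((CardConstellationsAux.Q r) ^ t).coeff (v * l) := by
    rw [CardConstellationsAux.card_T, CardConstellationsAux.coeff_Q_pow]
  rw [h1, CardConstellationsAux.count_f t r (v * l)]
  push_cast
  rw [CardConstellationsAux.card_S_eq_card_T, h2]
  rw [show CardConstellationsAux.Q r = (1 + X : Polynomial ℤ) ^ r - 1 - C (r : ℤ) * X from rfl]
  ring
end

section
/- Let F be a finite field with q elements, let K ≥ 1, M ≥ 0, N ≥ 0 and 1 ≤ d ≤ K be integers, let v ∈ F^K be a row vector with exactly l nonzero entries where 1 ≤ l ≤ K, and let H be an M×N matrix over F with rank(H) = k. Then Σ over all d-element subsets I ⊆ {1,…,K} of the number of d×M matrices G over F with v_I·G·H = 0 equals C(K−l, d)·q^{dM} + (C(K,d) − C(K−l,d))·q^{dM−k}, where v_I is the 1×d row subvector of v formed by the entries with indices in I. Equivalently, if I is a uniformly random d-element subset of {1,…,K} and G an independent uniformly random d×M matrix over F, then Pr{v_I·G·H = 0} = C(K−l,d)/C(K,d) + (1 −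 C(K−l,d)/C(K,d))·q^{−k}. -/
open Matrix Finset Module

section Aux
variable {F : Type*} [Field F] [Fintype F] [DecidableEq F]
variable {M N : ℕ}

/-- the linear map `G ↦ u ᵥ* G`. -/
noncomputable def psiMap (ι : Type*) [Fintype ι] (u : ι → F) :
    Matrix ι (Fin M) F →ₗ[F] (Fin M → F) where
  toFun G := Matrix.vecMul u G
  map_add' A B := Matrix.vecMul_add A B u
  map_smul' c A := by
    funext j
    simp [Matrix.vecMul, dotProduct, Finset.mul_sum, mul_left_comm]

lemma psiMap_surj (ι : Type*) [Fintype ι] [DecidableEq ι] (u : ι → F) (hu : u ≠ 0) :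
    Function.Surjective (psiMap (M := M) ι u) := by
  obtain ⟨i0, hi0⟩ : ∃ i, u i ≠ 0 := by
    by_contra h
    push_neg at h
    exact hu (funext h)
  intro w
  refine ⟨Matrix.of fun i j => if i = i0 then (u i0)⁻¹ * w j else 0, ?_⟩
  funext j
  simp only [psiMap, LinearMap.coe_mk, AddHom.coe_mk, Matrix.vecMul, dotProduct]
  rw [Finset.sum_eq_single i0]
  · simp [Matrix.of_apply, ← mul_assoc, mul_inv_cancel₀ hi0]
  · intro b _ hb; simp [Matrix.of_apply, hb]
  · simp

lemma count_aux (H : Matrix (Fin M) (Fin N) F) (ι : Type*) [Fintype ι] [DecidableEq ι]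
    (u : ι → F) :
    Nat.card {G : Matrix ι (Fin M) F // Matrix.vecMul u (G * H) = 0}
      = if u = 0 then (Fintype.card F) ^ (Fintype.card ι * M)
        else (Fintype.card F) ^ (Fintype.card ι * M - H.rank) := by
  classical
  set φ : Matrix ι (Fin M) F →ₗ[F] (Fin N → F) :=
    (Hᵀ.mulVecLin).comp (psiMap ι u) with hφ
  have hφ_apply : ∀ G : Matrix ι (Fin M) F, φ G = Matrix.vecMul u (G * H) := by
    intro G
    simp [hφ, psiMap, Matrix.mulVecLin_apply, Matrix.mulVec_transpose, Matrix.vecMul_vecMul]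
  have hker : Nat.card {G : Matrix ι (Fin M) F // Matrix.vecMul u (G * H) = 0}
      = Fintype.card (LinearMap.ker φ) := by
    rw [Nat.card_eq_fintype_card]
    apply Fintype.card_congr
    exact Equiv.subtypeEquivRight fun G => by simp [LinearMap.mem_ker, hφ_apply]
  have hfr : Fintype.card (LinearMap.ker φ)
      = (Fintype.card F) ^ (finrank F (LinearMap.ker φ)) := card_eq_pow_finrank
  have hdom : finrank F (Matrix ι (Fin M) F) = Fintype.card ι * M := by
    rw [Module.finrank_matrix]
    simp
  by_cases hu : u = 0
  · subst hu
    have htop : LinearMap.ker φ = ⊤ := by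
      ext G
      simp [LinearMap.mem_ker, hφ_apply]
    rw [if_pos rfl, hker, hfr, htop, finrank_top, hdom]
  · rw [if_neg hu]
    have hrange : LinearMap.range φ = LinearMap.range Hᵀ.mulVecLin := by
      rw [hφ, LinearMap.range_comp, LinearMap.range_eq_top.mpr (psiMap_surj ι u hu),
        Submodule.map_top]
    have hrank : finrank F (LinearMap.range φ) = H.rank := by
      rw [hrange, ← Matrix.rank, Matrix.rank_transpose]
    have hsum := LinearMap.finrank_range_add_finrank_ker φ
    rw [hdom, hrank] at hsum
    have hkdim : finrank F (LinearMap.ker φ) = Fintype.card ι * M - H.rank := by omega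
    rw [hker, hfr, hkdim]

end Aux

/-- Let `F` be a finite field with `q` elements, `1 ≤ d ≤ K`, `v ∈ F^K` a row
vector with exactly `l` nonzero entries (`1 ≤ l ≤ K`), and `H` an `M×N` matrix
over `F` with `rank H = k`. Then the sum, over all `d`-element subsets
`I ⊆ {1,…,K}`, of the number of `d×M` matrices `G` over `F` with
`v_I·G·H = 0` (where `v_I` is the subvector of `v` with indices in `I`, and
the rows of `G` are indexed by `I`) equals
`C(K−l, d)·q^{dM} + (C(K,d) − C(K−l,d))·q^{dM−k}`. Equivalently, for a
uniformly random `d`-element subset `I` of `{1,…,K}` and an independent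
uniformly random `d×M` matrix `G` over `F`,
`Pr{v_I·G·H = 0} = C(K−l,d)/C(K,d) + (1 − C(K−l,d)/C(K,d))·q^{−k}`. -/
theorem card_subvector_GH_eq_zero (F : Type*) [Field F] [Fintype F] [DecidableEq F]
    (q : ℕ) (hq : q = Fintype.card F)
    (K M N d l k : ℕ) (hK : 1 ≤ K) (hd1 : 1 ≤ d) (hdK : d ≤ K)
    (hl1 : 1 ≤ l) (hlK : l ≤ K)
    (v : Fin K → F) (hv : (Finset.univ.filter (fun i => v i ≠ 0)).card = l)
    (H : Matrix (Fin M) (Fin N) F) (hH : H.rank = k) :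
    ∑ I ∈ Finset.powersetCard d (Finset.univ : Finset (Fin K)),
        Nat.card {G : Matrix {x // x ∈ I} (Fin M) F //
          Matrix.vecMul (fun i : {x // x ∈ I} => v i.1) (G * H) = 0}
      = (K - l).choose d * q ^ (d * M)
        + (K.choose d - (K - l).choose d) * q ^ (d * M - k) ∧
    (∑ I ∈ Finset.powersetCard d (Finset.univ : Finset (Fin K)),
        (Nat.card {G : Matrix {x // x ∈ I} (Fin M) F //
          Matrix.vecMul (fun i : {x // x ∈ I} => v i.1) (G * H) = 0} : ℝ))
          / ((K.choose d : ℝ) * (q : ℝ) ^ (d * M))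
      = ((K - l).choose d : ℝ) / (K.choose d : ℝ)
        + (1 - ((K - l).choose d : ℝ) / (K.choose d : ℝ))
            * (q : ℝ) ^ (-(k : ℤ)) := by
  classical
  -- the zero set of v
  set Z : Finset (Fin K) := Finset.univ.filter (fun i => v i = 0) with hZ
  have hZcard : Z.card = K - l := by
    have : Z = (Finset.univ.filter (fun i => v i ≠ 0))ᶜ := by
      ext i; simp [hZ]
    rw [this, Finset.card_compl, hv, Fintype.card_fin]
  have hkdM : k ≤ d * M := by
    have h1 : H.rank ≤ M := (Matrix.rank_le_card_height H).trans (by simp)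
    have : M ≤ d * M := Nat.le_mul_of_pos_left M hd1
    omega
  -- main pointwise computation
  have key : ∀ I ∈ Finset.powersetCard d (Finset.univ : Finset (Fin K)),
      Nat.card {G : Matrix {x // x ∈ I} (Fin M) F //
        Matrix.vecMul (fun i : {x // x ∈ I} => v i.1) (G * H) = 0}
      = if I ⊆ Z then q ^ (d * M) else q ^ (d * M - k) := by
    intro I hI
    have hIcard : I.card = d := (Finset.mem_powersetCard.mp hI).2
    have hcardsub : Fintype.card {x // x ∈ I} = d := by
      rw [Fintype.card_coe, hIcard]
    rw [count_aux H _ (fun i : {x // x ∈ I} => v i.1), hcardsub, hH, ← hq]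
    have : ((fun i : {x // x ∈ I} => v i.1) = 0) ↔ I ⊆ Z := by
      constructor
      · intro h i hi
        simp only [hZ, Finset.mem_filter, Finset.mem_univ, true_and]
        exact congrFun h ⟨i, hi⟩
      · intro h
        funext i
        have := h i.2
        simp only [hZ, Finset.mem_filter] at this
        exact this.2
    by_cases hc : I ⊆ Z
    · rw [if_pos (this.mpr hc), if_pos hc]
    · rw [if_neg (fun h => hc (this.mp h)), if_neg hc]
  -- sum computation
  have hP : (Finset.powersetCard d (Finset.univ : Finset (Fin K))).card = K.choose d := by
    rw [Finset.card_powersetCard, Finset.card_univ, Fintype.card_fin]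
  have hfilter : (Finset.powersetCard d (Finset.univ : Finset (Fin K))).filter (· ⊆ Z)
      = Finset.powersetCard d Z := by
    ext I
    simp only [Finset.mem_filter, Finset.mem_powersetCard]
    constructor
    · rintro ⟨⟨-, hc⟩, hs⟩; exact ⟨hs, hc⟩
    · rintro ⟨hs, hc⟩; exact ⟨⟨Finset.subset_univ I, hc⟩, hs⟩
  have hfiltercard : ((Finset.powersetCard d (Finset.univ : Finset (Fin K))).filter
      (· ⊆ Z)).card = (K - l).choose d := by
    rw [hfilter, Finset.card_powersetCard, hZcard]
  have hnotcard : ((Finset.powersetCard d (Finset.univ : Finset (Fin K))).filter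
      (fun I => ¬ I ⊆ Z)).card = K.choose d - (K - l).choose d := by
    have := Finset.card_filter_add_card_filter_not
      (s := Finset.powersetCard d (Finset.univ : Finset (Fin K))) (p := (· ⊆ Z))
    rw [hP, hfiltercard] at this
    omega
  have hsum : ∑ I ∈ Finset.powersetCard d (Finset.univ : Finset (Fin K)),
      Nat.card {G : Matrix {x // x ∈ I} (Fin M) F //
        Matrix.vecMul (fun i : {x // x ∈ I} => v i.1) (G * H) = 0}
      = (K - l).choose d * q ^ (d * M)
        + (K.choose d - (K - l).choose d) * q ^ (d * M - k) := by
    rw [Finset.sum_congr rfl key]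
    rw [Finset.sum_ite, Finset.sum_const, Finset.sum_const, hfiltercard, hnotcard]
    simp [mul_comm]
  refine ⟨hsum, ?_⟩
  -- real part
  have hq2 : 2 ≤ q := hq ▸ Fintype.one_lt_card
  have hqR : (0 : ℝ) < (q : ℝ) := by positivity
  have hchoose_pos : 0 < K.choose d := Nat.choose_pos hdK
  have hle : (K - l).choose d ≤ K.choose d := Nat.choose_le_choose d (Nat.sub_le K l)
  have hcast : (∑ I ∈ Finset.powersetCard d (Finset.univ : Finset (Fin K)),
      (Nat.card {G : Matrix {x // x ∈ I} (Fin M) F //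
        Matrix.vecMul (fun i : {x // x ∈ I} => v i.1) (G * H) = 0} : ℝ))
      = ((K - l).choose d : ℝ) * q ^ (d * M)
        + ((K.choose d : ℝ) - ((K - l).choose d : ℝ)) * q ^ (d * M - k) := by
    rw [← Nat.cast_sum, hsum]
    push_cast [Nat.cast_sub hle]
    ring
  rw [hcast]
  have hpow : ((q : ℝ) ^ (d * M - k)) = (q : ℝ) ^ (d * M) * (q : ℝ) ^ (-(k : ℤ)) := by
    rw [← zpow_natCast (q : ℝ) (d * M - k), ← zpow_natCast (q : ℝ) (d * M), ← zpow_add₀ (ne_of_gt hqR)]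
    congr 1
    omega
  rw [hpow]
  have hc0 : (K.choose d : ℝ) ≠ 0 := Nat.cast_ne_zero.mpr hchoose_pos.ne'
  have hp0 : ((q : ℝ) ^ (d * M)) ≠ 0 := by positivity
  field_simp
end
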